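/- arXiv:1204.1961 — 3 statements merged into one kernel-verified Lean document; each statement's English description precedes it below -/
import Mathlib

section
/- Every finite simple graph on n ≥ 3 vertices with minimum degree δ ≥ n/2 contains a Hamilton cycle. -/
open SimpleGraph

variable {V : Type*}

/-- `G` is `k`-connected: more than `k` vertices and removing fewer than `k`
vertices leaves a connected graph. -/
def KConnected (G : SimpleGraph V) [Fintype V] [DecidableEq V] (k : ℕ) : Prop :=
  k < Fintype.card V ∧
    ∀ S : Finset V, S.card < k → (G.induce ((↑S : Set V)ᶜ)).Connected

/-- vertex connectivity `κ`. -/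
noncomputable def connectivity (G : SimpleGraph V) [Fintype V] [DecidableEq V] : ℕ :=
  sSup {k | KConnected G k}

/-- independence number `α`. -/
noncomputable def indepNumber (G : SimpleGraph V) [Fintype V] [DecidableEq V] : ℕ :=
  sSup {k | ∃ s : Finset V, (∀ u ∈ s, ∀ v ∈ s, ¬ G.Adj u v) ∧ s.card = k}

/-- circumference `c`: length of a longest cycle. -/
noncomputable def circumference (G : SimpleGraph V) [Fintype V] [DecidableEq V] : ℕ :=
  sSup {n | ∃ (v : V) (w : G.Walk v v), w.IsCycle ∧ w.length = n}

/-- `w` is a longest cycle of `G`. -/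
def IsLongestCycle {G : SimpleGraph V} {v : V} (w : G.Walk v v) : Prop :=
  w.IsCycle ∧ ∀ (u : V) (w' : G.Walk u u), w'.IsCycle → w'.length ≤ w.length

/-- dominating cycle: every edge has an endpoint on the cycle. -/
def IsDominatingCycle {G : SimpleGraph V} {v : V} (w : G.Walk v v) : Prop :=
  w.IsCycle ∧ ∀ x y, G.Adj x y → x ∈ w.support ∨ y ∈ w.support

/-- generalized cycle of length `n` with vertex set `W`: single vertices are
cycles of length 1, edges are cycles of length 2. -/
def ExtCycle (G : SimpleGraph V) (W : Set V) (n : ℕ) : Prop :=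
  (n = 1 ∧ ∃ v : V, W = {v}) ∨
  (n = 2 ∧ ∃ u v : V, G.Adj u v ∧ W = {u, v}) ∨
  (3 ≤ n ∧ ∃ (v : V) (w : G.Walk v v), w.IsCycle ∧ w.length = n ∧
      W = {x | x ∈ w.support})

/-- `p̄`: the length of a longest path in `G \ C`. -/
noncomputable def pathBar (G : SimpleGraph V) [Fintype V] [DecidableEq V] {v : V} (w : G.Walk v v) : ℕ :=
  sSup {n | ∃ (a b : {x : V | x ∉ w.support})
      (p : (G.induce {x : V | x ∉ w.support}).Walk a b), p.IsPath ∧ p.length = n}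

/-- `c̄`: the length of a longest (generalized) cycle in `G \ C`. -/
noncomputable def cycBar (G : SimpleGraph V) [Fintype V] [DecidableEq V] {v : V} (w : G.Walk v v) : ℕ :=
  sSup {n | ∃ W, ExtCycle (G.induce {x : V | x ∉ w.support}) W n}

/-- `CD_m`-cycle: every (generalized) cycle of length at least `m` meets `w`. -/
def IsCDCycle (G : SimpleGraph V) {v : V} (w : G.Walk v v) (m : ℕ) : Prop :=
  w.IsCycle ∧ ∀ (W : Set V) (n : ℕ), ExtCycle G W n → m ≤ n → ∃ x ∈ W, x ∈ w.support

section DiracAux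

open SimpleGraph Walk

variable {G : SimpleGraph V}

private lemma exists_dart_snd_eq : ∀ {a b : V} (p : G.Walk a b) {z : V},
    z ∈ p.support → z ≠ a → ∃ d ∈ p.darts, d.toProd.2 = z := by
  intro a b p
  induction p with
  | nil => intro z hz hza; simp only [Walk.support_nil, List.mem_singleton] at hz; exact absurd hz hza
  | @cons u v w h q ih =>
    intro z hz hza
    rcases eq_or_ne z v with rfl | hzv
    · exact ⟨⟨(u, z), h⟩, by simp [Walk.darts_cons], rfl⟩
    · have hz' : z ∈ q.support := by
        simp only [Walk.support_cons, List.mem_cons] at hz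
        tauto
      obtain ⟨d, hd, hds⟩ := ih hz' hzv
      exact ⟨d, by simp [Walk.darts_cons, hd], hds⟩

private lemma exists_dart_fst_eq : ∀ {a b : V} (p : G.Walk a b) {z : V},
    z ∈ p.support → z ≠ b → ∃ d ∈ p.darts, d.toProd.1 = z := by
  intro a b p
  induction p with
  | nil => intro z hz hzb; simp only [Walk.support_nil, List.mem_singleton] at hz; exact absurd hz hzb
  | @cons u v w h q ih =>
    intro z hz hzb
    rcases eq_or_ne z u with rfl | hzu
    · exact ⟨⟨(z, v), h⟩, by simp [Walk.darts_cons], rfl⟩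
    · have hz' : z ∈ q.support := by
        simp only [Walk.support_cons, List.mem_cons] at hz
        tauto
      obtain ⟨d, hd, hds⟩ := ih hz' hzb
      exact ⟨d, by simp [Walk.darts_cons, hd], hds⟩

private lemma exists_decomp_of_mem_darts {x y : V} (hxy : G.Adj x y) :
    ∀ {a b : V} (p : G.Walk a b), (⟨(x, y), hxy⟩ : G.Dart) ∈ p.darts →
      ∃ (q : G.Walk a x) (r : G.Walk y b), p = q.append (Walk.cons hxy r) := by
  intro a b p
  induction p with
  | nil => intro hd; simp [Walk.darts_nil] at hd
  | @cons u v w h q ih =>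
    intro hd
    rw [Walk.darts_cons, List.mem_cons] at hd
    rcases hd with hd | hd
    · have hx : x = u := congrArg (fun d : G.Dart => d.toProd.1) hd
      have hy : y = v := congrArg (fun d : G.Dart => d.toProd.2) hd
      subst hx; subst hy
      exact ⟨Walk.nil, q, by rw [Walk.nil_append]⟩
    · obtain ⟨q', r, rfl⟩ := ih hd
      exact ⟨Walk.cons h q', r, by rw [Walk.cons_append]⟩

end DiracAux

theorem dirac_hamiltonian (G : SimpleGraph V) [Fintype V] [DecidableEq V] [DecidableRel G.Adj]
    (hn : 3 ≤ Fintype.card V)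
    (hδ : (G.minDegree : ℝ) ≥ (Fintype.card V : ℝ) / 2) :
    G.IsHamiltonian := by
  classical
  intro _hcard
  have hδ2 : Fintype.card V ≤ 2 * G.minDegree := by
    have h2 : (Fintype.card V : ℝ) ≤ 2 * G.minDegree := by
      rw [ge_iff_le, div_le_iff₀ (by norm_num : (0:ℝ) < 2)] at hδ
      linarith
    exact_mod_cast h2
  haveI : Nonempty V := Fintype.card_pos_iff.mp (by omega)
  -- G is preconnected
  have hpre : G.Preconnected := by
    intro u v
    rcases eq_or_ne u v with rfl | huv
    · rfl
    by_cases hadj : G.Adj u v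
    · exact hadj.reachable
    have hsub : G.neighborFinset u ∪ G.neighborFinset v ⊆ Finset.univ \ {u, v} := by
      intro z hz
      simp only [Finset.mem_union, mem_neighborFinset] at hz
      simp only [Finset.mem_sdiff, Finset.mem_univ, true_and, Finset.mem_insert,
        Finset.mem_singleton, not_or]
      rcases hz with hz | hz
      · exact ⟨hz.ne', fun h => hadj (h ▸ hz)⟩
      · exact ⟨fun h => hadj ((h ▸ hz).symm), hz.ne'⟩
    have hcard2 : (Finset.univ \ {u, v} : Finset V).card = Fintype.card V - 2 := by
      rw [Finset.card_sdiff_of_subset (Finset.subset_univ _), Finset.card_univ, Finset.card_pair huv]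
    have hinter : (G.neighborFinset u ∩ G.neighborFinset v).Nonempty := by
      rw [← Finset.card_pos]
      have h1 := Finset.card_union_add_card_inter (G.neighborFinset u) (G.neighborFinset v)
      have h2 : (G.neighborFinset u ∪ G.neighborFinset v).card ≤ Fintype.card V - 2 :=
        le_trans (Finset.card_le_card hsub) (le_of_eq hcard2)
      have h3 : G.minDegree ≤ (G.neighborFinset u).card := by
        rw [card_neighborFinset_eq_degree]; exact G.minDegree_le_degree u
      have h4 : G.minDegree ≤ (G.neighborFinset v).card := by
        rw [card_neighborFinset_eq_degree]; exact G.minDegree_le_degree v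
      omega
    obtain ⟨z, hz⟩ := hinter
    rw [Finset.mem_inter, mem_neighborFinset, mem_neighborFinset] at hz
    exact hz.1.reachable.trans hz.2.symm.reachable
  -- a longest path
  set P : ℕ → Prop := fun m => ∃ (c d : V) (p : G.Walk c d), p.IsPath ∧ p.length = m with hP_def
  have hP0 : P 0 := ⟨Classical.arbitrary V, Classical.arbitrary V, Walk.nil, Walk.IsPath.nil, rfl⟩
  set k := Nat.findGreatest P (Fintype.card V) with hk_def
  have hPk : P k := Nat.findGreatest_spec (Nat.zero_le _) hP0
  have hmax : ∀ (c d : V) (p : G.Walk c d), p.IsPath → p.length ≤ k := fun c d p hp =>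
    Nat.le_findGreatest (le_of_lt hp.length_lt) ⟨c, d, p, hp, rfl⟩
  obtain ⟨a, b, p, hp, hpk⟩ := hPk
  -- all neighbors of the endpoints lie on the path
  have hNa : ∀ z, G.Adj a z → z ∈ p.support := by
    intro z hz
    by_contra hzs
    have hp' : (Walk.cons hz.symm p).IsPath := hp.cons hzs
    have := hmax _ _ _ hp'
    rw [Walk.length_cons, hpk] at this
    omega
  have hNb : ∀ z, G.Adj b z → z ∈ p.support := by
    intro z hz
    by_contra hzs
    have hp' : (Walk.cons hz.symm p.reverse).IsPath :=
      hp.reverse.cons (by rwa [Walk.support_reverse, List.mem_reverse])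
    have := hmax _ _ _ hp'
    rw [Walk.length_cons, Walk.length_reverse, hpk] at this
    omega
  -- dart counting / pigeonhole
  have hdn : p.darts.Nodup :=
    List.Nodup.of_map SimpleGraph.Dart.edge
      (show (p.darts.map SimpleGraph.Dart.edge).Nodup from hp.isTrail.edges_nodup)
  have hAcard : G.degree a ≤ (p.darts.toFinset.filter (fun d => G.Adj a d.toProd.2)).card := by
    rw [← card_neighborFinset_eq_degree]
    apply Finset.card_le_card_of_surjOn (fun d : G.Dart => d.toProd.2)
    intro z hz
    rw [Finset.mem_coe, mem_neighborFinset] at hz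
    obtain ⟨d, hd, hds⟩ := exists_dart_snd_eq p (hNa z hz) hz.ne'
    refine ⟨d, ?_, hds⟩
    simp only [Finset.coe_filter, Set.mem_setOf_eq, List.mem_toFinset]
    exact ⟨hd, by rw [hds]; exact hz⟩
  have hBcard : G.degree b ≤ (p.darts.toFinset.filter (fun d => G.Adj b d.toProd.1)).card := by
    rw [← card_neighborFinset_eq_degree]
    apply Finset.card_le_card_of_surjOn (fun d : G.Dart => d.toProd.1)
    intro z hz
    rw [Finset.mem_coe, mem_neighborFinset] at hz
    obtain ⟨d, hd, hds⟩ := exists_dart_fst_eq p (hNb z hz) hz.ne'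
    refine ⟨d, ?_, hds⟩
    simp only [Finset.coe_filter, Set.mem_setOf_eq, List.mem_toFinset]
    exact ⟨hd, by rw [hds]; exact hz⟩
  have hdc : p.darts.toFinset.card = k := by
    rw [List.toFinset_card_of_nodup hdn, Walk.length_darts, hpk]
  have hsupc : p.support.toFinset.card = k + 1 := by
    rw [List.toFinset_card_of_nodup hp.support_nodup, Walk.length_support, hpk]
  have hkn : k + 1 ≤ Fintype.card V := by
    rw [← hsupc, ← Finset.card_univ]
    exact Finset.card_le_univ _
  have hdega := G.minDegree_le_degree a
  have hdegb := G.minDegree_le_degree b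
  have hk2 : 2 ≤ k := by
    have h1 := Finset.card_le_card
      (Finset.filter_subset (fun d => G.Adj a d.toProd.2) p.darts.toFinset)
    omega
  obtain ⟨d, hdmem⟩ : ((p.darts.toFinset.filter fun d => G.Adj a d.toProd.2) ∩
      (p.darts.toFinset.filter fun d => G.Adj b d.toProd.1)).Nonempty := by
    rw [← Finset.card_pos]
    have hu := Finset.card_union_add_card_inter
      (p.darts.toFinset.filter fun d => G.Adj a d.toProd.2)
      (p.darts.toFinset.filter fun d => G.Adj b d.toProd.1)
    have hUsub : ((p.darts.toFinset.filter fun d => G.Adj a d.toProd.2) ∪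
        (p.darts.toFinset.filter fun d => G.Adj b d.toProd.1)) ⊆ p.darts.toFinset :=
      Finset.union_subset (Finset.filter_subset _ _) (Finset.filter_subset _ _)
    have := Finset.card_le_card hUsub
    omega
  obtain ⟨⟨x, y⟩, hxy⟩ := d
  rw [Finset.mem_inter, Finset.mem_filter, Finset.mem_filter, List.mem_toFinset] at hdmem
  obtain ⟨⟨hdp, hay⟩, -, hbx⟩ := hdmem
  -- decompose the path at the crossing dart
  obtain ⟨q, r, hpqr⟩ := exists_decomp_of_mem_darts hxy p hdp
  have hp2 : (q.append (Walk.cons hxy r)).IsPath := hpqr ▸ hp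
  have hq : q.IsPath := hp2.of_append_left
  have hr : r.IsPath := hp2.of_append_right.of_cons
  have hsup : p.support = q.support ++ r.support := by
    rw [hpqr, Walk.support_append, Walk.support_cons, List.tail_cons]
  have hnd : (q.support ++ r.support).Nodup := hsup ▸ hp.support_nodup
  have hdisj : ∀ z, z ∈ q.support → z ∉ r.support :=
    fun z hz1 hz2 => (List.disjoint_of_nodup_append hnd) hz1 hz2
  have hxq : x ∈ q.support := q.end_mem_support
  have hyr : y ∈ r.support := r.start_mem_support
  have haq : a ∈ q.support := q.start_mem_support
  have hbr : b ∈ r.support := r.end_mem_support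
  have hab : a ≠ b := fun h => hdisj a haq (by rw [h]; exact hbr)
  have hlenp : p.length = q.length + r.length + 1 := by
    rw [hpqr, Walk.length_append, Walk.length_cons]; omega
  -- the crossing cycle
  set w : G.Walk x b := q.reverse.append (Walk.cons hay r) with hw_def
  have hwsup : w.support = q.support.reverse ++ r.support := by
    rw [hw_def, Walk.support_append, Walk.support_reverse, Walk.support_cons, List.tail_cons]
  have hwnd : w.support.Nodup := by
    rw [hwsup, List.nodup_append, List.nodup_reverse]
    rw [List.nodup_append] at hnd
    exact ⟨hnd.1, hnd.2.1, fun z hz => hnd.2.2 z (List.mem_reverse.mp hz)⟩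
  have hwpath : w.IsPath := Walk.IsPath.mk' hwnd
  have hwlen : w.length = q.length + r.length + 1 := by
    rw [hw_def, Walk.length_append, Walk.length_reverse, Walk.length_cons]; omega
  have hwedge : s(b, x) ∉ w.edges := by
    intro hmem
    rw [hw_def, Walk.edges_append, Walk.edges_reverse, Walk.edges_cons] at hmem
    rw [List.mem_append, List.mem_reverse, List.mem_cons] at hmem
    rcases hmem with hmem | hmem | hmem
    · exact hdisj b (q.fst_mem_support_of_mem_edges hmem) hbr
    · rw [Sym2.eq_iff] at hmem
      rcases hmem with ⟨h1, -⟩ | ⟨h1, h2⟩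
      · exact hab h1.symm
      · subst h1; subst h2
        have hq0 : q = Walk.nil := Walk.isPath_iff_eq_nil.mp hq
        have hr0 : r = Walk.nil := Walk.isPath_iff_eq_nil.mp hr
        rw [hq0, hr0] at hlenp
        simp only [Walk.length_nil] at hlenp
        omega
    · exact hdisj x hxq (r.snd_mem_support_of_mem_edges hmem)
  have hC : (Walk.cons hbx w).IsCycle := (Walk.cons_isCycle_iff w hbx).mpr ⟨hwpath, hwedge⟩
  set C : G.Walk b b := Walk.cons hbx w with hC_def
  have hCsup : ∀ z, z ∈ C.support ↔ z ∈ p.support := by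
    intro z
    rw [hC_def, Walk.support_cons, List.mem_cons, hwsup, hsup]
    rw [List.mem_append, List.mem_append, List.mem_reverse]
    constructor
    · rintro (rfl | h | h)
      · exact Or.inr hbr
      · exact Or.inl h
      · exact Or.inr h
    · rintro (h | h)
      · exact Or.inr (Or.inl h)
      · exact Or.inr (Or.inr h)
  have hClen : C.length = k + 1 := by
    rw [hC_def, Walk.length_cons]
    omega
  by_cases hall : ∀ z : V, z ∈ p.support
  · -- the cycle is Hamiltonian
    refine ⟨b, C, ?_⟩
    rw [Walk.isHamiltonianCycle_isCycle_and_isHamiltonian_tail]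
    refine ⟨hC, ?_⟩
    intro z
    rw [Walk.support_tail_of_not_nil C hC.not_nil, hC_def, Walk.support_cons, List.tail_cons]
    apply List.count_eq_one_of_mem hwnd
    rw [hwsup, List.mem_append, List.mem_reverse]
    have hz := hall z
    rw [hsup, List.mem_append] at hz
    exact hz
  · -- otherwise we could build a longer path, contradiction
    exfalso
    push_neg at hall
    obtain ⟨u0, hu0⟩ := hall
    obtain ⟨W⟩ := hpre u0 b
    obtain ⟨d2, hd2w, hd2f, hd2s⟩ := W.exists_boundary_dart {z | z ∉ C.support}
      (fun h => hu0 ((hCsup u0).mp h))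
      (by rw [Set.mem_setOf_eq, not_not]; exact C.start_mem_support)
    rw [Set.mem_setOf_eq, not_not] at hd2s
    set C2 := C.rotate _ hd2s with hC2_def
    have hC2cyc : C2.IsCycle := hC.rotate hd2s
    have hC2len : C2.length = k + 1 := by
      have hdl : C2.darts.length = C.darts.length := (Walk.rotate_darts C _ hd2s).perm.length_eq
      rw [Walk.length_darts, Walk.length_darts] at hdl
      omega
    have hC2supsub : ∀ z, z ∈ C2.support → z ∈ C.support := by
      intro z hz
      rw [Walk.support_eq_cons C2, List.mem_cons] at hz
      rcases hz with rfl | hz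
      · exact hd2s
      · exact List.mem_of_mem_tail (((Walk.support_rotate C _ hd2s).perm.mem_iff).mp hz)
    obtain ⟨v1, hadj1, t, hC2eq⟩ := Walk.not_nil_iff.mp hC2cyc.not_nil
    have htpath : t.IsPath := ((Walk.cons_isCycle_iff t hadj1).mp (hC2eq ▸ hC2cyc)).1
    have hnew : (Walk.cons d2.adj t.reverse).IsPath := by
      apply htpath.reverse.cons
      rw [Walk.support_reverse, List.mem_reverse]
      intro hmem
      apply hd2f
      apply hC2supsub
      rw [hC2eq, Walk.support_cons]
      exact List.mem_cons_of_mem _ hmem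
    have hle := hmax _ _ _ hnew
    rw [Walk.length_cons, Walk.length_reverse] at hle
    have ht1 : C2.length = t.length + 1 := by rw [hC2eq, Walk.length_cons]
    omega
end

section
/- Every finite simple graph on at least 3 vertices with connectivity κ at least its independence number α is hamiltonian. -/
open SimpleGraph

variable {V : Type*}

namespace CEaux
open Walk
variable {G : SimpleGraph V} {v u w : V}


lemma darts_snd_nodup {C : G.Walk v v} (hC : C.IsCycle) :
    (C.darts.map (·.snd)).Nodup := by
  rw [C.map_snd_darts]; exact hC.support_nodup

lemma darts_fst_nodup {C : G.Walk v v} (hC : C.IsCycle) :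
    (C.darts.map (·.fst)).Nodup := by
  rw [C.map_fst_darts]
  have ht : C.support.tail.Nodup := hC.support_nodup
  have hne : C.support.tail ≠ [] := by
    have hl := C.length_support
    have h3 := hC.three_le_length
    intro h
    have : C.support.tail.length = 0 := by rw [h]; rfl
    rw [List.length_tail, hl] at this
    omega
  have hlast : C.support.tail.getLast hne = v := by
    rw [List.getLast_tail, C.getLast_support]
  have hsplit : C.support.tail.dropLast ++ [v] = C.support.tail := by
    refine List.dropLast_append_getLast? v ?_
    rw [List.getLast?_eq_getLast hne, hlast]
    rfl
  have hnd : v ∉ C.support.tail.dropLast ∧ C.support.tail.dropLast.Nodup := by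
    rw [← hsplit] at ht
    have := List.nodup_append'.mp ht
    exact ⟨fun hv => this.2.2 hv (List.mem_singleton_self v), this.1⟩
  have : C.support.dropLast = v :: C.support.tail.dropLast := by
    rw [C.support_eq_cons]
    exact List.dropLast_cons_of_ne_nil hne
  rw [this]
  exact List.nodup_cons.mpr ⟨hnd.1, hnd.2⟩


lemma exists_dart_fst {C : G.Walk v v} (hn : ¬ C.Nil) (hu : u ∈ C.support) :
    ∃ d ∈ C.darts, d.fst = u := by
  have hdne : C.darts ≠ [] := by
    intro h
    have := C.length_darts
    rw [h] at this
    rw [not_nil_iff_lt_length] at hn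
    simp at this; omega
  have h1 : C.darts.map (·.fst) ++ [v] = C.support := C.map_fst_darts_append
  rw [← h1, List.mem_append] at hu
  rcases hu with hu | hu
  · obtain ⟨d, hd, hdu⟩ := List.mem_map.mp hu
    exact ⟨d, hd, hdu⟩
  · have hu : u = v := by simpa using hu
    refine ⟨C.darts.head hdne, List.head_mem hdne, ?_⟩
    exact (congrArg (·.fst) (C.head_darts_eq_firstDart hdne)).trans hu.symm


noncomputable def nxt (C : G.Walk v v) (hC : C.IsCycle) (u : V) (hu : u ∈ C.support) : V :=
  (exists_dart_fst hC.not_nil hu).choose.snd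

lemma nxt_spec (C : G.Walk v v) (hC : C.IsCycle) (hu : u ∈ C.support) :
    ∃ d ∈ C.darts, d.fst = u ∧ d.snd = nxt C hC u hu := by
  obtain ⟨hd, hfst⟩ := (exists_dart_fst hC.not_nil hu).choose_spec
  exact ⟨_, hd, hfst, rfl⟩

lemma nxt_eq_of_dart {C : G.Walk v v} (hC : C.IsCycle) (hu : u ∈ C.support)
    {d : G.Dart} (hd : d ∈ C.darts) (hfst : d.fst = u) : nxt C hC u hu = d.snd := by
  obtain ⟨d', hd', hfst', hsnd'⟩ := nxt_spec C hC hu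
  have : d' = d := by
    exact List.inj_on_of_nodup_map (darts_fst_nodup hC) hd' hd (by rw [hfst, hfst'])
  rw [← hsnd', this]

lemma adj_nxt {C : G.Walk v v} (hC : C.IsCycle) (hu : u ∈ C.support) :
    G.Adj u (nxt C hC u hu) := by
  obtain ⟨d, _, hfst, hsnd⟩ := nxt_spec C hC hu
  have := d.adj; rw [hfst, hsnd] at this; exact this

lemma nxt_mem {C : G.Walk v v} (hC : C.IsCycle) (hu : u ∈ C.support) :
    nxt C hC u hu ∈ C.support := by
  obtain ⟨d, hd, _, hsnd⟩ := nxt_spec C hC hu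
  rw [← hsnd]; exact C.dart_snd_mem_support_of_mem_darts hd

lemma nxt_inj {C : G.Walk v v} (hC : C.IsCycle) (hu : u ∈ C.support) (hw : w ∈ C.support)
    (huw : u ≠ w) : nxt C hC u hu ≠ nxt C hC w hw := by
  obtain ⟨d, hd, hfst, hsnd⟩ := nxt_spec C hC hu
  obtain ⟨d', hd', hfst', hsnd'⟩ := nxt_spec C hC hw
  rw [← hsnd, ← hsnd']
  intro h
  have : d = d' := List.inj_on_of_nodup_map (darts_snd_nodup hC) hd hd' h
  exact huw (by rw [← hfst, ← hfst', this])

lemma mem_support_tail {C : G.Walk v v} (hC : C.IsCycle) {y : V} (hy : y ∈ C.support) :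
    y ∈ C.support.tail := by
  rw [C.support_eq_cons] at hy
  rcases List.mem_cons.mp hy with rfl | hy2
  · have hdne : C.darts ≠ [] := by
      intro hnil
      have h2 := C.length_darts
      have h3 := hC.three_le_length
      rw [hnil] at h2; simp at h2; omega
    have h4 : (C.darts.getLast hdne).snd = y := (congrArg (·.snd) (C.getLast_darts_eq_lastDart hdne)).trans rfl
    rw [← C.map_snd_darts]
    exact List.mem_map.mpr ⟨_, List.getLast_mem hdne, h4⟩
  · exact hy2

lemma no_succ_nbr [DecidableEq V] {C : G.Walk v v} (hC : C.IsCycle)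
    (hmax : ∀ (z : V) (w' : G.Walk z z), w'.IsCycle → w'.length ≤ C.length)
    {u a b : V} (hu : u ∈ C.support) (ha : a ∉ C.support) (hb : b ∉ C.support)
    (hua : G.Adj u a) (P : G.Walk a b) (hP : P.IsPath)
    (hPd : ∀ y ∈ P.support, y ∉ C.support)
    (hnb : G.Adj (nxt C hC u hu) b) : False := by
  set D := C.rotate u hu with hDdef
  have hD : D.IsCycle := hC.rotate hu
  obtain ⟨u₁, hadj, q, hq⟩ := Walk.not_nil_iff.mp hD.not_nil
  -- identify nxt
  have hdartmem : (⟨(u, u₁), hadj⟩ : G.Dart) ∈ C.darts := by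
    have h1 : (⟨(u, u₁), hadj⟩ : G.Dart) ∈ D.darts := by
      rw [hq, darts_cons]; exact List.mem_cons_self
    exact (C.rotate_darts u hu).perm.subset h1
  have hnxt : nxt C hC u hu = u₁ := nxt_eq_of_dart hC hu hdartmem rfl
  rw [hnxt] at hnb
  -- support facts
  have hqsup : q.support = D.support.tail := by rw [hq, support_cons, List.tail_cons]
  have hqnodup : q.support.Nodup := by rw [hqsup]; exact hD.support_nodup
  have hqsubC : ∀ y ∈ q.support, y ∈ C.support := by
    intro y hy
    have h2 : y ∈ C.support.tail := (C.support_rotate u hu).mem_iff.mp (hqsup ▸ hy)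
    rw [C.support_eq_cons]
    exact List.mem_cons_of_mem _ h2
  -- the new long cycle
  have hTnodup : (P.append (Walk.cons hnb.symm q)).support.Nodup := by
    rw [support_append, support_cons, List.tail_cons, List.nodup_append']
    refine ⟨hP.support_nodup, hqnodup, ?_⟩
    intro y hy hy'
    exact hPd y hy (hqsubC y hy')
  have hTpath : (P.append (Walk.cons hnb.symm q)).IsPath := IsPath.mk' hTnodup
  have hedge : s(u, a) ∉ (P.append (Walk.cons hnb.symm q)).edges := by
    rw [edges_append, edges_cons, List.mem_append, List.mem_cons]
    rintro (hmem | hmem | hmem)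
    · exact hPd u (P.fst_mem_support_of_mem_edges hmem) hu
    · rw [Sym2.eq_iff] at hmem
      rcases hmem with ⟨h1, h2⟩ | ⟨h1, h2⟩
      · exact hb (h1 ▸ hu)
      · exact hadj.ne (h1.trans rfl)
    · exact ha (hqsubC a (q.snd_mem_support_of_mem_edges hmem))
  have hN : (Walk.cons hua (P.append (Walk.cons hnb.symm q))).IsCycle := by
    rw [cons_isCycle_iff]
    exact ⟨hTpath, hedge⟩
  have hlen := hmax u _ hN
  have hClen : C.length = q.length + 1 := by
    have h1 : D.length = C.length := by
      have := (C.rotate_darts u hu).perm.length_eq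
      rwa [D.length_darts, C.length_darts] at this
    rw [← h1, hq, length_cons]
  simp only [length_cons, length_append] at hlen
  omega
lemma no_succ_adj [DecidableEq V] {C : G.Walk v v} (hC : C.IsCycle)
    (hmax : ∀ (z : V) (w' : G.Walk z z), w'.IsCycle → w'.length ≤ C.length)
    {u w a b : V} (hu : u ∈ C.support) (hw : w ∈ C.support) (huw : u ≠ w)
    (ha : a ∉ C.support) (hb : b ∉ C.support)
    (hua : G.Adj u a) (hwb : G.Adj w b) (P : G.Walk a b) (hP : P.IsPath)
    (hPd : ∀ y ∈ P.support, y ∉ C.support)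
    (hadj : G.Adj (nxt C hC u hu) (nxt C hC w hw)) : False := by
  set D := C.rotate u hu with hDdef
  have hD : D.IsCycle := hC.rotate hu
  obtain ⟨u₁, hadj₁, q, hq⟩ := Walk.not_nil_iff.mp hD.not_nil
  have hnxtu : nxt C hC u hu = u₁ := by
    have h1 : (⟨(u, u₁), hadj₁⟩ : G.Dart) ∈ D.darts := by
      rw [hq, darts_cons]; exact List.mem_cons_self
    exact nxt_eq_of_dart hC hu ((C.rotate_darts u hu).perm.subset h1) rfl
  have hqsup : q.support = D.support.tail := by rw [hq, support_cons, List.tail_cons]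
  have hqnodup : q.support.Nodup := by rw [hqsup]; exact hD.support_nodup
  have hqsubC : ∀ y ∈ q.support, y ∈ C.support := by
    intro y hy
    have h2 : y ∈ C.support.tail := (C.support_rotate u hu).mem_iff.mp (hqsup ▸ hy)
    rw [C.support_eq_cons]; exact List.mem_cons_of_mem _ h2
  -- split q at w
  have hvtail : ∀ y ∈ C.support, y ∈ C.support.tail := by
    intro y hy
    rw [C.support_eq_cons] at hy
    rcases List.mem_cons.mp hy with rfl | hy
    · have hdne : C.darts ≠ [] := by
        intro hnil
        have h2 := C.length_darts
        have h3 := hC.three_le_length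
        rw [hnil] at h2; simp at h2; omega
      have h4 : (C.darts.getLast hdne).snd = y := (congrArg (·.snd) (C.getLast_darts_eq_lastDart hdne)).trans rfl
      rw [← C.map_snd_darts]
      exact List.mem_map.mpr ⟨_, List.getLast_mem hdne, h4⟩
    · exact hy
  have hwq : w ∈ q.support := by
    rw [hqsup]
    exact (C.support_rotate u hu).mem_iff.mpr (hvtail w hw)
  set q1 := q.takeUntil w hwq with hq1def
  set q2 := q.dropUntil w hwq with hq2def
  have hspec : q1.append q2 = q := q.take_spec hwq
  obtain ⟨w₁, hadj₂, r, hq2⟩ := Walk.not_nil_iff.mp (not_nil_of_ne (Ne.symm huw) : ¬ q2.Nil)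
  have hnxtw : nxt C hC w hw = w₁ := by
    have h1 : (⟨(w, w₁), hadj₂⟩ : G.Dart) ∈ D.darts := by
      rw [hq, darts_cons]
      refine List.mem_cons_of_mem _ ?_
      rw [← hspec, darts_append, List.mem_append, hq2, darts_cons]
      exact Or.inr (List.mem_cons_self)
    exact nxt_eq_of_dart hC hw ((C.rotate_darts u hu).perm.subset h1) rfl
  rw [hnxtu, hnxtw] at hadj
  -- support decomposition of q
  have hqsplit : q.support = q1.support ++ r.support := by
    rw [← hspec, support_append, hq2, support_cons, List.tail_cons]
  have hq1nodup : q1.support.Nodup := by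
    rw [hqsplit, List.nodup_append'] at hqnodup; exact hqnodup.1
  have hrnodup : r.support.Nodup := by
    rw [hqsplit, List.nodup_append'] at hqnodup; exact hqnodup.2.1
  have hdisj : ∀ y ∈ q1.support, y ∉ r.support := by
    rw [hqsplit, List.nodup_append'] at hqnodup; exact fun y hy hy' => hqnodup.2.2 hy hy'
  have hq1subC : ∀ y ∈ q1.support, y ∈ C.support := fun y hy =>
    hqsubC y (by rw [hqsplit]; exact List.mem_append_left _ hy)
  have hrsubC : ∀ y ∈ r.support, y ∈ C.support := fun y hy =>
    hqsubC y (by rw [hqsplit]; exact List.mem_append_right _ hy)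
  -- the new cycle T
  set X₂ := Walk.cons hwb P.reverse with hX2def
  set X₁ := q1.append X₂ with hX1def
  set T := r.reverse.append (Walk.cons hadj.symm X₁) with hTdef
  have hTsup : T.support = r.support.reverse ++ (q1.support ++ P.support.reverse) := by
    rw [hTdef, support_append, support_cons, List.tail_cons, hX1def, support_append,
      hX2def, support_cons, List.tail_cons, support_reverse, support_reverse]
  have hTnodup : T.support.Nodup := by
    rw [hTsup, List.nodup_append', List.nodup_append']
    refine ⟨(by rw [List.nodup_reverse]; exact hrnodup), ⟨hq1nodup, by rw [List.nodup_reverse]; exact hP.support_nodup, ?_⟩, ?_⟩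
    · intro y hy hy'
      exact hPd y (List.mem_reverse.mp hy') (hq1subC y hy)
    · intro y hy
      rw [List.mem_append]
      rintro (hy' | hy')
      · exact hdisj y hy' (List.mem_reverse.mp hy)
      · exact hPd y (List.mem_reverse.mp hy') (hrsubC y (List.mem_reverse.mp hy))
  have hedge : s(a, u) ∉ T.edges := by
    rw [hTdef, edges_append, edges_cons, hX1def, edges_append, hX2def, edges_cons,
      List.mem_append, List.mem_cons, List.mem_append, List.mem_cons]
    rintro (hmem | hmem | hmem | hmem | hmem)
    · refine ha (?_ : a ∈ C.support)
      have := r.reverse.fst_mem_support_of_mem_edges hmem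
      rw [support_reverse, List.mem_reverse] at this
      exact hrsubC a this
    · rw [Sym2.eq_iff] at hmem
      rcases hmem with ⟨h1, h2⟩ | ⟨h1, h2⟩
      · exact ha (h1 ▸ hnxtw ▸ nxt_mem hC hw)
      · exact ha (h1 ▸ hnxtu ▸ nxt_mem hC hu)
    · exact ha (hq1subC a (q1.fst_mem_support_of_mem_edges hmem))
    · rw [Sym2.eq_iff] at hmem
      rcases hmem with ⟨h1, h2⟩ | ⟨h1, h2⟩
      · exact ha (h1 ▸ hw)
      · exact huw h2
    · refine (hPd u ?_ hu)
      have := P.reverse.snd_mem_support_of_mem_edges hmem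
      rwa [support_reverse, List.mem_reverse] at this
  have hN : (Walk.cons hua.symm T).IsCycle := by
    rw [cons_isCycle_iff]
    exact ⟨IsPath.mk' hTnodup, hedge⟩
  have hlen := hmax a _ hN
  have hClen : C.length = q.length + 1 := by
    have h1 : D.length = C.length := by
      have := (C.rotate_darts u hu).perm.length_eq
      rwa [D.length_darts, C.length_darts] at this
    rw [← h1, hq, length_cons]
  have hqlen : q.length = q1.length + (r.length + 1) := by
    rw [← hspec, length_append, hq2, length_cons]
  have hTlen : T.length = r.length + (q1.length + (P.length + 1) + 1) := by
    rw [hTdef, length_append, length_reverse, length_cons, hX1def, length_append,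
      hX2def, length_cons, length_reverse]
  simp only [length_cons] at hlen
  omega

lemma exists_path_outside [DecidableEq V] {s : Set V} {a b : V} (ha : a ∈ s) (hb : b ∈ s)
    (hr : (G.induce s).Reachable ⟨a, ha⟩ ⟨b, hb⟩) :
    ∃ P : G.Walk a b, P.IsPath ∧ ∀ y ∈ P.support, y ∈ s := by
  obtain ⟨W⟩ := hr
  classical
  let W' := W.toPath
  refine ⟨(W'.1.map (Embedding.induce s (G:=G)).toHom), ?_, ?_⟩
  · exact Walk.map_isPath_of_injective (Embedding.induce s (G:=G)).injective W'.2
  · intro y hy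
    erw [Walk.support_map, List.mem_map] at hy
    obtain ⟨z, _, rfl⟩ := hy
    exact z.2

lemma triangle_cycle {x y z : V} (hxy : G.Adj x y) (hyz : G.Adj y z) (hzx : G.Adj z x) :
    (Walk.cons hxy (Walk.cons hyz (Walk.cons hzx Walk.nil))).IsCycle := by
  have h1 : x ≠ y := hxy.ne
  have h2 : y ≠ z := hyz.ne
  have h3 : z ≠ x := hzx.ne
  rw [cons_isCycle_iff]
  refine ⟨IsPath.mk' ?_, ?_⟩
  · simp only [support_cons, support_nil, List.nodup_cons, List.mem_cons,
      List.not_mem_nil, List.nodup_nil]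
    push_neg
    exact ⟨⟨h2, fun h => h1 h.symm, trivial⟩, ⟨h3, trivial⟩, trivial, trivial⟩
  · simp only [edges_cons, edges_nil, List.mem_cons, List.not_mem_nil, or_false,
      Sym2.eq_iff]
    push_neg
    exact ⟨⟨fun h _ => h1 h, fun h => h3 h.symm⟩, fun h hyx => h1 hyx.symm, fun _ => h2⟩
variable {G : SimpleGraph V}

variable [Fintype V] [DecidableEq V]

lemma kconn_conn (G : SimpleGraph V) (h0 : 0 < Fintype.card V) :
    KConnected G (connectivity G) := by
  have hbdd : BddAbove {k | KConnected G k} := ⟨Fintype.card V, fun k hk => le_of_lt hk.1⟩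
  have h00 : (0 : ℕ) ∈ {k | KConnected G k} := ⟨h0, fun S hS => absurd hS (by omega)⟩
  exact Nat.sSup_mem ⟨0, h00⟩ hbdd

lemma indep_le (G : SimpleGraph V) {s : Finset V} (hs : ∀ u ∈ s, ∀ v ∈ s, ¬ G.Adj u v) :
    s.card ≤ indepNumber G := by
  refine le_csSup ⟨Fintype.card V, ?_⟩ ⟨s, hs, rfl⟩
  rintro k ⟨t, _, rfl⟩
  exact t.card_le_univ.trans_eq (Finset.card_univ)

lemma exists_cycle (G : SimpleGraph V) (hn : 3 ≤ Fintype.card V)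
    (h : indepNumber G ≤ connectivity G) :
    ∃ (z : V) (c : G.Walk z z), c.IsCycle := by
  classical
  have hκmem : KConnected G (connectivity G) := kconn_conn G (by omega)
  by_cases hcomp : ∀ x y : V, x ≠ y → G.Adj x y
  · obtain ⟨x, y, z, hxy, hxz, hyz⟩ := (Fintype.two_lt_card_iff (α := V)).mp (by omega)
    exact ⟨x, _, triangle_cycle (hcomp x y hxy) (hcomp y z hyz) (hcomp z x hxz.symm)⟩
  · push_neg at hcomp
    obtain ⟨p, q, hpq, hnadj⟩ := hcomp
    have h2 : 2 ≤ connectivity G := by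
      refine le_trans ?_ h
      have : ({p, q} : Finset V).card = 2 := by rw [Finset.card_insert_of_notMem (by simpa using hpq), Finset.card_singleton]
      refine this ▸ indep_le G ?_
      intro a ha b hb hab
      simp only [Finset.mem_insert, Finset.mem_singleton] at ha hb
      rcases ha with rfl | rfl <;> rcases hb with rfl | rfl
      · exact hab.ne rfl
      · exact hnadj hab
      · exact hnadj hab.symm
      · exact hab.ne rfl
    obtain ⟨v0⟩ : Nonempty V := Fintype.card_pos_iff.mp (by omega)
    -- v0 has two distinct neighbors
    have hnbrs : ∃ u w, G.Adj v0 u ∧ G.Adj v0 w ∧ u ≠ w := by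
      by_contra hcon
      push_neg at hcon
      have hcard : (G.neighborFinset v0).card < 2 := by
        by_contra hge
        push_neg at hge
        obtain ⟨a, ha, b, hb, hab⟩ := Finset.one_lt_card.mp hge
        exact hab (hcon a b (by rwa [mem_neighborFinset] at ha) (by rwa [mem_neighborFinset] at hb))
      have hconn := hκmem.2 _ (lt_of_lt_of_le hcard h2)
      have hv0 : v0 ∈ ((↑(G.neighborFinset v0) : Set V)ᶜ) := by
        simp [mem_neighborFinset]
      obtain ⟨z, hz⟩ : ∃ z, z ∉ (G.neighborFinset v0) ∪ {v0} := by
        by_contra hall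
        push_neg at hall
        have : Finset.univ ⊆ (G.neighborFinset v0) ∪ {v0} := fun z _ => hall z
        have := Finset.card_le_card this
        rw [Finset.card_univ] at this
        have h5 := Finset.card_union_le (G.neighborFinset v0) {v0}
        rw [Finset.card_singleton] at h5
        omega
      have hzmem : z ∈ ((↑(G.neighborFinset v0) : Set V)ᶜ) := by
        simp only [Finset.mem_union, Finset.mem_singleton, not_or] at hz
        simpa using hz.1
      have hzne : v0 ≠ z := by
        simp only [Finset.mem_union, Finset.mem_singleton, not_or] at hz
        exact fun hh => hz.2 hh.symm
      obtain ⟨W⟩ := hconn.preconnected ⟨v0, hv0⟩ ⟨z, hzmem⟩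
      have : ¬ W.Nil := Walk.not_nil_of_ne (by simpa using hzne)
      obtain ⟨m, hadj, _, _⟩ := Walk.not_nil_iff.mp this
      have : G.Adj v0 ↑m := hadj
      have := m.2
      simp only [Set.mem_compl_iff, Finset.coe_sort_coe, Finset.mem_coe,
        mem_neighborFinset] at this
      exact this ‹G.Adj v0 ↑m›
    obtain ⟨u, w, hvu, hvw, huw⟩ := hnbrs
    by_cases hadjuw : G.Adj u w
    · exact ⟨v0, _, triangle_cycle hvu hadjuw hvw.symm⟩
    · have hconn := hκmem.2 {v0} (by rw [Finset.card_singleton]; omega)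
      have humem : u ∈ ((↑({v0} : Finset V) : Set V)ᶜ) := by simpa using hvu.ne'
      have hwmem : w ∈ ((↑({v0} : Finset V) : Set V)ᶜ) := by simpa using hvw.ne'
      obtain ⟨P, hP, hPs⟩ := exists_path_outside humem hwmem
        (hconn.preconnected ⟨u, humem⟩ ⟨w, hwmem⟩)
      have hPv0 : ∀ y ∈ P.support, y ≠ v0 := fun y hy => by simpa using hPs y hy
      refine ⟨v0, Walk.cons hvu (P.append (Walk.cons hvw.symm Walk.nil)), ?_⟩
      rw [cons_isCycle_iff]
      constructor
      · refine IsPath.mk' ?_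
        rw [support_append, support_cons, List.tail_cons, support_nil, List.nodup_append']
        refine ⟨hP.support_nodup, List.nodup_singleton _, ?_⟩
        intro y hy hy'
        rw [List.mem_singleton] at hy'
        exact hPv0 y hy hy'
      · rw [edges_append, edges_cons, edges_nil, List.mem_append, List.mem_singleton]
        rintro (hmem | hmem)
        · exact hPv0 v0 (P.fst_mem_support_of_mem_edges hmem) rfl
        · rw [Sym2.eq_iff] at hmem
          rcases hmem with ⟨h1, h2⟩ | ⟨h1, h2⟩
          · exact hvw.ne' h1.symm
          · exact huw h2
end CEaux

open CEaux in

theorem chvatal_erdos (G : SimpleGraph V) [Fintype V] [DecidableEq V]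
    (hn : 3 ≤ Fintype.card V)
    (h : indepNumber G ≤ connectivity G) :
    G.IsHamiltonian := by
  classical
  intro _
  have hκmem : KConnected G (connectivity G) := kconn_conn G (by omega)
  -- longest cycle
  have hLbdd : BddAbove {n | ∃ (z : V) (c : G.Walk z z), c.IsCycle ∧ c.length = n} := by
    refine ⟨Fintype.card V, ?_⟩
    rintro n ⟨z, c, hc, rfl⟩
    have h1 : c.support.tail.length ≤ Fintype.card V := hc.support_nodup.length_le_card
    have h2 := c.length_support
    rw [List.length_tail, h2] at h1
    omega
  obtain ⟨z, c, hcyc⟩ := exists_cycle G hn h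
  obtain ⟨z0, C, hC, hClen⟩ :=
    Nat.sSup_mem (⟨c.length, z, c, hcyc, rfl⟩ :
      Set.Nonempty {n | ∃ (z : V) (c : G.Walk z z), c.IsCycle ∧ c.length = n}) hLbdd
  have hmax : ∀ (y : V) (c' : G.Walk y y), c'.IsCycle → c'.length ≤ C.length := by
    intro y c' hc'
    rw [hClen]
    exact le_csSup hLbdd ⟨y, c', hc', rfl⟩
  by_cases hall : ∀ y : V, y ∈ C.support
  · refine ⟨z0, C, ?_⟩
    rw [Walk.isHamiltonianCycle_iff_isCycle_and_support_count_tail_eq_one]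
    refine ⟨hC, fun a => ?_⟩
    exact List.count_eq_one_of_mem hC.support_nodup (mem_support_tail hC (hall a))
  · push_neg at hall
    obtain ⟨x, hx⟩ := hall
    exfalso
    set Kset : Set V := {y | y ∉ C.support} with hKdef
    have hxK : x ∈ Kset := hx
    set Hset : Set V := {y | ∃ hy : y ∈ Kset, (G.induce Kset).Reachable ⟨y, hy⟩ ⟨x, hxK⟩}
      with hHdef
    have hHnotC : ∀ y ∈ Hset, y ∉ C.support := fun y hy => hy.1
    have hxH : x ∈ Hset := ⟨hxK, Reachable.refl _⟩
    have hpath : ∀ a ∈ Hset, ∀ b ∈ Hset,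
        ∃ P : G.Walk a b, P.IsPath ∧ ∀ y ∈ P.support, y ∉ C.support := by
      rintro a ⟨haK, hra⟩ b ⟨hbK, hrb⟩
      obtain ⟨P, hP, hPs⟩ := exists_path_outside haK hbK (hra.trans hrb.symm)
      exact ⟨P, hP, fun y hy => hPs y hy⟩
    set Sfin : Finset V :=
      Finset.univ.filter (fun y => y ∈ C.support ∧ ∃ z ∈ Hset, G.Adj y z) with hSdef
    have hSsub : ∀ y ∈ Sfin, y ∈ C.support := by
      intro y hy; rw [hSdef, Finset.mem_filter] at hy; exact hy.2.1
    have hSnbr : ∀ y ∈ Sfin, ∃ z ∈ Hset, G.Adj y z := by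
      intro y hy; rw [hSdef, Finset.mem_filter] at hy; exact hy.2.2
    have hmemS : ∀ y, y ∈ C.support → (∃ z ∈ Hset, G.Adj y z) → y ∈ Sfin := by
      intro y h1 h2; rw [hSdef, Finset.mem_filter]; exact ⟨Finset.mem_univ y, h1, h2⟩
    -- no successor of an Sfin vertex has a neighbor in Hset
    have key1 : ∀ u (hu : u ∈ C.support), u ∈ Sfin →
        ∀ z ∈ Hset, ¬ G.Adj (nxt C hC u hu) z := by
      intro u hu huS z hz hadj
      obtain ⟨a, haH, hua⟩ := hSnbr u huS
      obtain ⟨P, hP, hPd⟩ := hpath a haH z hz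
      exact no_succ_nbr hC hmax hu (hHnotC a haH) (hHnotC z hz) hua P hP hPd hadj
    -- some cycle vertex is not in Sfin
    obtain ⟨cc, hccC, hccS⟩ : ∃ cc ∈ C.support, cc ∉ Sfin := by
      by_contra hcon
      push_neg at hcon
      have h1 : z0 ∈ Sfin := hcon z0 C.start_mem_support
      have h2 : nxt C hC z0 C.start_mem_support ∈ Sfin := hcon _ (nxt_mem hC _)
      obtain ⟨z1, hz1, hadj⟩ := hSnbr _ h2
      exact key1 z0 C.start_mem_support h1 z1 hz1 hadj
    -- Sfin is a separator, so it has at least κ elements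
    have hcard : connectivity G ≤ Sfin.card := by
      by_contra hlt
      push_neg at hlt
      have hconn := hκmem.2 Sfin hlt
      have hxmem : x ∈ ((↑Sfin : Set V)ᶜ) := fun hmem => hx (hSsub x (by simpa using hmem))
      have hccmem : cc ∈ ((↑Sfin : Set V)ᶜ) := by simpa using hccS
      obtain ⟨W⟩ := hconn.preconnected ⟨x, hxmem⟩ ⟨cc, hccmem⟩
      have hclosed : ∀ (s t : ↑((↑Sfin : Set V)ᶜ)) (W : (G.induce ((↑Sfin : Set V)ᶜ)).Walk s t),
          ↑s ∈ Hset → ↑t ∈ Hset := by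
        intro s t W
        induction W with
        | nil => exact id
        | @cons s' m t' hadj p ih =>
          intro hs
          refine ih ?_
          have hGadj : G.Adj ↑s' ↑m := hadj
          by_cases hmC : ↑m ∈ C.support
          · exfalso
            have : (↑m : V) ∈ Sfin := hmemS _ hmC ⟨↑s', hs, hGadj.symm⟩
            have hm2 := m.2
            simp only [Set.mem_compl_iff, Finset.mem_coe] at hm2
            exact hm2 this
          · obtain ⟨hsK, hsr⟩ := hs
            refine ⟨hmC, ?_⟩
            refine Reachable.trans ?_ hsr
            exact Adj.reachable (by exact hGadj.symm)
      have := hclosed _ _ W hxH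
      exact hHnotC cc this hccC
    -- build the independent set
    set nxtf : V → V := fun y => if hy : y ∈ C.support then nxt C hC y hy else y with hnf
    have hnxtf : ∀ y (hy : y ∈ C.support), nxtf y = nxt C hC y hy := by
      intro y hy; rw [hnf]; exact dif_pos hy
    set Tfin : Finset V := Sfin.image nxtf ∪ {x} with hTdef
    have hxnotim : x ∉ Sfin.image nxtf := by
      rw [Finset.mem_image]
      rintro ⟨y, hy, hiy⟩
      rw [hnxtf y (hSsub y hy)] at hiy
      exact hx (hiy ▸ nxt_mem hC (hSsub y hy))
    have hTcard : Tfin.card = Sfin.card + 1 := by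
      rw [hTdef, Finset.card_union_of_disjoint (by simpa using hxnotim),
        Finset.card_singleton, Finset.card_image_of_injOn]
      intro a ha b hb hab
      rw [hnxtf a (hSsub a ha), hnxtf b (hSsub b hb)] at hab
      by_contra hne
      exact nxt_inj hC (hSsub a ha) (hSsub b hb) hne hab
    have hTindep : ∀ p ∈ Tfin, ∀ q ∈ Tfin, ¬ G.Adj p q := by
      have hcases : ∀ p ∈ Tfin, p = x ∨ ∃ y, ∃ hy : y ∈ Sfin, p = nxt C hC y (hSsub y hy) := by
        intro p hp
        rw [hTdef, Finset.mem_union, Finset.mem_singleton, Finset.mem_image] at hp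
        rcases hp with ⟨y, hy, hiy⟩ | rfl
        · exact Or.inr ⟨y, hy, by rw [← hnxtf y (hSsub y hy)]; exact hiy.symm⟩
        · exact Or.inl rfl
      intro p hp q hq hadj
      rcases hcases p hp with hpx | ⟨y, hy, hpy⟩ <;> rcases hcases q hq with hqx | ⟨y', hy', hqy⟩
      · rw [hpx, hqx] at hadj
        exact G.irrefl hadj
      · rw [hpx, hqy] at hadj
        exact key1 y' (hSsub y' hy') hy' x hxH hadj.symm
      · rw [hpy, hqx] at hadj
        exact key1 y (hSsub y hy) hy x hxH hadj
      · rw [hpy, hqy] at hadj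
        by_cases hyy : y = y'
        · subst hyy
          exact G.irrefl hadj
        · obtain ⟨a, haH, hya⟩ := hSnbr y hy
          obtain ⟨b, hbH, hyb⟩ := hSnbr y' hy'
          obtain ⟨P, hP, hPd⟩ := hpath a haH b hbH
          exact no_succ_adj hC hmax (hSsub y hy) (hSsub y' hy') hyy (hHnotC a haH)
            (hHnotC b hbH) hya hyb P hP hPd hadj
    have hfinal := indep_le G hTindep
    rw [hTcard] at hfinal
    omega
end

section
/- Every finite simple graph on n ≥ 3 vertices with minimum degree δ and at most δ² + δ − 1 edges is hamiltonian. -/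
open SimpleGraph

set_option linter.unusedSectionVars false
set_option linter.unusedVariables false

namespace NikoAux

open Finset List

variable {V : Type*} [Fintype V] [DecidableEq V] (G : SimpleGraph V) [DecidableRel G.Adj]

/-- A path, as a list of vertices. -/
def PL (l : List V) : Prop := l.IsChain G.Adj ∧ l.Nodup

/-- A cycle, as a list of vertices (closing edge from last to head). -/
def CL (l : List V) : Prop :=
  l.IsChain G.Adj ∧ l.Nodup ∧ ∀ (h : l ≠ []), G.Adj (l.getLast h) (l.head h)

/-- A spanning (hamiltonian) cycle list. -/
def HC (l : List V) : Prop := CL G l ∧ ∀ v, v ∈ l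

/-- Build a walk from a chain. -/
def chainWalk : (a : V) → (l : List V) → List.IsChain G.Adj (a :: l) → G.Walk a (l.getLastD a)
  | _, [], _ => Walk.nil
  | a, b :: t, h =>
      (Walk.cons (List.chain_cons.mp h).1 (chainWalk b t (List.chain_cons.mp h).2)).copy
        rfl (List.getLastD_cons (a := a) (b := b) (l := t)).symm

lemma chainWalk_support (a : V) (l : List V) (h : List.IsChain G.Adj (a :: l)) :
    (chainWalk G a l h).support = a :: l := by
  induction l generalizing a with
  | nil => rfl
  | cons b t ih =>
    show ((Walk.cons _ (chainWalk G b t _)).copy rfl _).support = _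
    rw [Walk.support_copy, Walk.support_cons, ih]

lemma mem_edges_decomp {u w : V} (p : G.Walk u w) {a b : V} (h : s(a,b) ∈ p.edges) :
    ∃ l₁ l₂, p.support = l₁ ++ a :: b :: l₂ ∨ p.support = l₁ ++ b :: a :: l₂ := by
  induction p with
  | nil => simp at h
  | @cons u v w hadj p ih =>
    rw [Walk.edges_cons, List.mem_cons] at h
    rcases h with h | h
    · refine ⟨[], p.support.tail, ?_⟩
      rcases Sym2.eq_iff.mp h.symm with ⟨rfl, rfl⟩ | ⟨rfl, rfl⟩
      · left; rw [List.nil_append, Walk.support_cons, p.support_eq_cons]; rfl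
      · right; rw [List.nil_append, Walk.support_cons, p.support_eq_cons]; rfl
    · obtain ⟨l₁, l₂, h'⟩ := ih h
      exact ⟨u :: l₁, l₂, by
        rcases h' with h' | h' <;> [left; right] <;> simp [Walk.support_cons, h']⟩

theorem isHamiltonian_of_HC (hcard : 3 ≤ Fintype.card V) (hex : ∃ l, HC G l) :
    G.IsHamiltonian := by
  obtain ⟨l, ⟨hch, hnd, hclose⟩, hspan⟩ := hex
  have hne : l ≠ [] := by
    have : Nonempty V := Fintype.card_pos_iff.mp (by omega)
    obtain ⟨v⟩ := this
    intro h; simpa [h] using hspan v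
  have hlen : l.length = Fintype.card V := by
    have h1 : l.toFinset = Finset.univ := by ext v; simp [hspan v]
    have := List.toFinset_card_of_nodup hnd
    rw [h1] at this
    simpa [Finset.card_univ] using this.symm
  obtain ⟨a, rest, rfl⟩ := List.exists_cons_of_ne_nil hne
  have hrne : rest ≠ [] := by
    intro h; rw [h] at hlen; simp at hlen; omega
  obtain ⟨b, rest', rfl⟩ := List.exists_cons_of_ne_nil hrne
  have hab : G.Adj a b := (List.isChain_cons_cons.mp hch).1
  have hchain2 : List.IsChain G.Adj (b :: (rest' ++ [a])) := by
    have h1 : List.IsChain G.Adj ((b :: rest') ++ [a]) := by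
      rw [List.isChain_append]
      refine ⟨hch.tail, List.isChain_singleton a, ?_⟩
      intro x hx y hy
      simp only [List.head?_cons, Option.mem_def, Option.some.injEq] at hy
      subst hy
      rw [List.getLast?_eq_getLast (by simp), Option.mem_def, Option.some.injEq] at hx
      subst hx
      have h2 := hclose (by simp)
      rwa [List.getLast_cons (by simp : b :: rest' ≠ [])] at h2
    simpa using h1
  let p : G.Walk b a := (chainWalk G b (rest' ++ [a]) hchain2).copy rfl (by simp)
  have hsupp : p.support = (b :: rest') ++ [a] := by
    simp only [p, Walk.support_copy, chainWalk_support]; rfl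
  have hperm : (b :: rest' ++ [a]).Perm (a :: b :: rest') := by
    simpa using List.perm_append_singleton a (b :: rest')
  have hpnd : p.support.Nodup := by rw [hsupp]; exact hperm.nodup_iff.mpr hnd
  have hpath : p.IsPath := p.isPath_def.mpr hpnd
  have hlen3 : 3 ≤ rest'.length + 2 := by
    simp only [List.length_cons] at hlen; omega
  have hLlen : p.support.length = rest'.length + 2 := by
    rw [hsupp]; simp
  have hlast : p.support[p.support.length - 1]'(by omega) = a := by
    rw [List.getElem_of_eq hsupp, List.getElem_append_right (by simp [hLlen])]
    simp [hLlen]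
  have hedge : s(a, b) ∉ p.edges := by
    intro hmem
    obtain ⟨l₁, l₂, hd⟩ := mem_edges_decomp G p hmem
    rcases hd with hd | hd
    · have hl : p.support.length = l₁.length + (l₂.length + 2) := by
        rw [hd]; simp only [List.length_append, List.length_cons]
      have h1 : p.support[l₁.length]'(by omega) = a := by
        rw [List.getElem_of_eq hd, List.getElem_append_right (le_refl _)]
        simp
      have := (hpnd.getElem_inj_iff).mp (h1.trans hlast.symm)
      omega
    · have hl : p.support.length = l₁.length + (l₂.length + 2) := by
        rw [hd]; simp only [List.length_append, List.length_cons]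
      have h1 : p.support[l₁.length + 1]'(by omega) = a := by
        rw [List.getElem_of_eq hd, List.getElem_append_right (by omega)]
        simp
      have hia := (hpnd.getElem_inj_iff).mp (h1.trans hlast.symm)
      have h3 : p.support[l₁.length]'(by omega) = b := by
        rw [List.getElem_of_eq hd, List.getElem_append_right (le_refl _)]
        simp
      have h4 : p.support[0]'(by omega) = b := by
        rw [List.getElem_of_eq hsupp]; rfl
      have := (hpnd.getElem_inj_iff).mp (h3.trans h4.symm)
      omega
  let w : G.Walk a a := Walk.cons hab p
  have hcyc : w.IsCycle := (Walk.cons_isCycle_iff p hab).mpr ⟨hpath, hedge⟩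
  refine fun _ => ⟨a, w, hcyc, ?_⟩
  intro v
  rw [Walk.support_tail_of_not_nil w hcyc.not_nil]
  have hws : w.support = a :: p.support := Walk.support_cons hab p
  rw [hws]
  simp only [List.tail_cons]
  refine List.count_eq_one_of_mem hpnd ?_
  rw [hsupp]
  exact hperm.symm.subset (hspan v)


lemma crossing_cycle {l : List V} (hch : l.IsChain G.Adj) (hnd : l.Nodup) {k : ℕ}
    (hk : k + 1 < l.length)
    (h0 : G.Adj (l[0]'(by omega)) (l[k+1]'hk))
    (h1 : G.Adj (l[l.length - 1]'(by omega)) (l[k]'(by omega))) :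
    ∃ c, CL G c ∧ c.Perm l := by
  refine ⟨l.take (k+1) ++ (l.drop (k+1)).reverse, ⟨?_, ?_, ?_⟩, ?_⟩
  case _ => -- perm handled last, do chain' first
    rw [List.isChain_append]
    refine ⟨hch.prefix (l.take_prefix (k+1)), (List.isChain_reverse).mpr
      ((hch.suffix (l.drop_suffix (k+1))).imp fun a b hab => hab.symm), ?_⟩
    intro x hx y hy
    have htne : l.take (k+1) ≠ [] := by
      have : (l.take (k+1)).length = k+1 := by simp [List.length_take]; omega
      intro h; rw [h] at this; simp at this
    have hdne : l.drop (k+1) ≠ [] := by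
      have : (l.drop (k+1)).length = l.length - (k+1) := by simp
      intro h; rw [h] at this; simp at this; omega
    have hrne : (l.drop (k+1)).reverse ≠ [] := by simpa using hdne
    rw [List.getLast?_eq_getLast htne, Option.mem_def, Option.some.injEq] at hx
    rw [List.head?_eq_head hrne, Option.mem_def, Option.some.injEq] at hy
    subst hx hy
    have hxval : (l.take (k+1)).getLast htne = l[k]'(by omega) := by
      rw [List.getLast_eq_getElem]
      have hlt : (l.take (k+1)).length = k+1 := by simp [List.length_take]; omega
      simp only [hlt]
      rw [List.getElem_take]
      simp
    have hyval : (l.drop (k+1)).reverse.head hrne = l[l.length - 1]'(by omega) := by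
      rw [List.head_eq_getElem, List.getElem_reverse, List.getElem_drop]
      congr 1
      simp
      omega
    rw [hxval, hyval]
    exact h1.symm
  case _ =>
    have hperm : (l.take (k+1) ++ (l.drop (k+1)).reverse).Perm l := by
      calc l.take (k+1) ++ (l.drop (k+1)).reverse
          ~ l.take (k+1) ++ l.drop (k+1) := List.Perm.append_left _ ((l.drop (k+1)).reverse_perm)
        _ = l := List.take_append_drop _ _
    exact hperm.symm.nodup hnd
  case _ =>
    intro hne
    have hdne : l.drop (k+1) ≠ [] := by
      have : (l.drop (k+1)).length = l.length - (k+1) := by simp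
      intro h; rw [h] at this; simp at this; omega
    have hrne : (l.drop (k+1)).reverse ≠ [] := by simpa using hdne
    have htne : l.take (k+1) ≠ [] := by
      have : (l.take (k+1)).length = k+1 := by simp [List.length_take]; omega
      intro h; rw [h] at this; simp at this
    have hlast : (l.take (k+1) ++ (l.drop (k+1)).reverse).getLast hne
        = l[k+1]'hk := by
      rw [List.getLast_append_of_ne_nil _ hrne]
      rw [List.getLast_reverse]
      rw [List.head_eq_getElem, List.getElem_drop]
    have hhead : (l.take (k+1) ++ (l.drop (k+1)).reverse).head hne = l[0]'(by omega) := by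
      rw [List.head_append_of_ne_nil htne, List.head_eq_getElem, List.getElem_take]
    rw [hlast, hhead]
    exact h0.symm
  case _ =>
    calc l.take (k+1) ++ (l.drop (k+1)).reverse
        ~ l.take (k+1) ++ l.drop (k+1) := List.Perm.append_left _ ((l.drop (k+1)).reverse_perm)
      _ = l := List.take_append_drop _ _

lemma extend_path {c : List V} (hc : CL G c) {z : V} (hz : z ∉ c) {j : ℕ} (hj : j < c.length)
    (ha : G.Adj z (c.get ⟨j, hj⟩)) : PL G (z :: c.rotate j) := by
  obtain ⟨hch, hnd, hclose⟩ := hc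
  have hcne : c ≠ [] := by intro h; subst h; simp at hj
  constructor
  · rw [List.isChain_cons]
    constructor
    · intro y hy
      have hrne : c.rotate j ≠ [] := by
        intro h
        have := List.length_rotate c j
        rw [h] at this; simp at this; omega
      rw [List.head?_eq_head hrne, Option.mem_def, Option.some.injEq] at hy
      subst hy
      have : (c.rotate j).head hrne = c.get ⟨j, hj⟩ := by
        rw [List.head_eq_getElem, List.getElem_rotate]
        simp [Nat.mod_eq_of_lt hj]
      rw [this]
      exact ha
    · -- IsChain of rotate
      rw [List.rotate_eq_drop_append_take (le_of_lt hj), List.isChain_append]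
      refine ⟨hch.suffix (c.drop_suffix j), hch.prefix (c.take_prefix j), ?_⟩
      intro x hx y hy
      rcases Nat.eq_zero_or_pos j with rfl | hjpos
      · simp at hy
      have htne : c.take j ≠ [] := by
        have : (c.take j).length = j := by simp [List.length_take]; omega
        intro h; rw [h] at this; simp at this; omega
      have hdne : c.drop j ≠ [] := by
        have : (c.drop j).length = c.length - j := by simp
        intro h; rw [h] at this; simp at this; omega
      rw [List.getLast?_eq_getLast hdne, Option.mem_def, Option.some.injEq] at hx
      rw [List.head?_eq_head htne, Option.mem_def, Option.some.injEq] at hy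
      subst hx hy
      have hx' : (c.drop j).getLast hdne = c.getLast hcne := by
        rw [List.getLast_eq_getElem, List.getLast_eq_getElem, List.getElem_drop]
        congr 1
        simp
        omega
      have hy' : (c.take j).head htne = c.head hcne := by
        rw [List.head_eq_getElem, List.head_eq_getElem, List.getElem_take]
      rw [hx', hy']
      exact hclose hcne
  · refine List.nodup_cons.mpr ⟨fun hmem => hz ((c.rotate_perm j).subset hmem), ?_⟩
    exact ((c.rotate_perm j).nodup_iff).mpr hnd


lemma getElem_idx_eq {α : Type*} (l : List α) {i j : ℕ} (hij : i = j) (hi : i < l.length) :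
    l[i]'hi = l[j]'(hij ▸ hi) := by subst hij; rfl


lemma endpoints_pigeonhole {l : List V} (hne : l ≠ []) (hnd : l.Nodup)
    (hnbh : ∀ w, G.Adj (l.head hne) w → w ∈ l)
    (hnbl : ∀ w, G.Adj (l.getLast hne) w → w ∈ l)
    (hδ1 : 1 ≤ G.minDegree)
    (hcnt : l.length ≤ 2 * G.minDegree)
    (hnadj : ¬ G.Adj (l.head hne) (l.getLast hne)) :
    ∃ k, k + 1 < l.length ∧
      G.Adj (l.head hne) (l.getD (k+1) (l.head hne)) ∧
      G.Adj (l.getLast hne) (l.getD k (l.head hne)) := by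
  classical
  have hnpos : 0 < l.length := List.length_pos_iff.mpr hne
  have hv0e : l.head hne = l[0]'(by omega) := List.head_eq_getElem hne
  have hvle : l.getLast hne = l[l.length-1]'(by omega) := List.getLast_eq_getElem hne
  have hIcard : G.minDegree ≤
      ((Finset.range (l.length - 1)).filter
        (fun k => G.Adj (l.head hne) (l.getD (k+1) (l.head hne)))).card := by
    refine le_trans (G.minDegree_le_degree (l.head hne)) ?_
    refine Finset.card_le_card_of_injOn (fun w => l.idxOf w - 1) ?_ ?_
    · intro w hw
      rw [Finset.mem_coe, SimpleGraph.mem_neighborFinset] at hw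
      have hwl : w ∈ l := hnbh w hw
      have hidx : l.idxOf w < l.length := List.idxOf_lt_length_iff.mpr hwl
      have hgw : l[l.idxOf w]'hidx = w := List.getElem_idxOf hidx
      have hne0 : l.idxOf w ≠ 0 := by
        intro h0
        exact hw.ne' (by rw [← hgw, hv0e]; exact getElem_idx_eq l h0 hidx)
      have hnel : l.idxOf w ≠ l.length - 1 := by
        intro h0
        apply hnadj
        have : w = l.getLast hne := by rw [← hgw, hvle]; exact getElem_idx_eq l h0 hidx
        rwa [← this]
      rw [Finset.mem_coe, Finset.mem_filter, Finset.mem_range]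
      refine ⟨show l.idxOf w - 1 < l.length - 1 by omega, ?_⟩
      show G.Adj (l.head hne) (l.getD (l.idxOf w - 1 + 1) (l.head hne))
      have h1 : l.idxOf w - 1 + 1 = l.idxOf w := by omega
      rw [h1, List.getD_eq_getElem l _ hidx, hgw]
      exact hw
    · intro w hw w' hw' heq
      simp only [Finset.coe_sort_coe, Finset.mem_coe, SimpleGraph.mem_neighborFinset] at hw hw'
      simp only at heq
      have hwl : w ∈ l := hnbh w hw
      have hwl' : w' ∈ l := hnbh w' hw'
      have hidx : l.idxOf w < l.length := List.idxOf_lt_length_iff.mpr hwl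
      have hidx' : l.idxOf w' < l.length := List.idxOf_lt_length_iff.mpr hwl'
      have hne0 : l.idxOf w ≠ 0 := by
        intro h0
        exact hw.ne' (by rw [← List.getElem_idxOf hidx, hv0e]; exact getElem_idx_eq l h0 hidx)
      have hne0' : l.idxOf w' ≠ 0 := by
        intro h0
        exact hw'.ne' (by rw [← List.getElem_idxOf hidx', hv0e]; exact getElem_idx_eq l h0 hidx')
      have hii : l.idxOf w = l.idxOf w' := by omega
      rw [← List.getElem_idxOf hidx, ← List.getElem_idxOf hidx']
      exact getElem_idx_eq l hii hidx
  have hJcard : G.minDegree ≤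
      ((Finset.range (l.length - 1)).filter
        (fun k => G.Adj (l.getLast hne) (l.getD k (l.head hne)))).card := by
    refine le_trans (G.minDegree_le_degree (l.getLast hne)) ?_
    refine Finset.card_le_card_of_injOn (fun w => l.idxOf w) ?_ ?_
    · intro w hw
      rw [Finset.mem_coe, SimpleGraph.mem_neighborFinset] at hw
      have hwl : w ∈ l := hnbl w hw
      have hidx : l.idxOf w < l.length := List.idxOf_lt_length_iff.mpr hwl
      have hgw : l[l.idxOf w]'hidx = w := List.getElem_idxOf hidx
      have hnel : l.idxOf w ≠ l.length - 1 := by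
        intro h0
        exact hw.ne' (by rw [← hgw, hvle]; exact getElem_idx_eq l h0 hidx)
      rw [Finset.mem_coe, Finset.mem_filter, Finset.mem_range]
      refine ⟨show l.idxOf w < l.length - 1 by omega, ?_⟩
      show G.Adj (l.getLast hne) (l.getD (l.idxOf w) (l.head hne))
      rw [List.getD_eq_getElem l _ hidx, hgw]
      exact hw
    · intro w hw w' hw' heq
      simp only [Finset.coe_sort_coe, Finset.mem_coe, SimpleGraph.mem_neighborFinset] at hw hw'
      simp only at heq
      have hidx : l.idxOf w < l.length := List.idxOf_lt_length_iff.mpr (hnbl w hw)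
      have hidx' : l.idxOf w' < l.length := List.idxOf_lt_length_iff.mpr (hnbl w' hw')
      rw [← List.getElem_idxOf hidx, ← List.getElem_idxOf hidx']
      exact getElem_idx_eq l heq hidx
  have hIJ : ¬ Disjoint
      ((Finset.range (l.length - 1)).filter
        (fun k => G.Adj (l.head hne) (l.getD (k+1) (l.head hne))))
      ((Finset.range (l.length - 1)).filter
        (fun k => G.Adj (l.getLast hne) (l.getD k (l.head hne)))) := by
    intro hd
    have hcu := Finset.card_union_of_disjoint hd
    have hsub : ((Finset.range (l.length - 1)).filter
        (fun k => G.Adj (l.head hne) (l.getD (k+1) (l.head hne)))) ∪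
        ((Finset.range (l.length - 1)).filter
        (fun k => G.Adj (l.getLast hne) (l.getD k (l.head hne)))) ⊆ Finset.range (l.length - 1) :=
      Finset.union_subset (Finset.filter_subset _ _) (Finset.filter_subset _ _)
    have hle := Finset.card_le_card hsub
    rw [hcu, Finset.card_range] at hle
    omega
  obtain ⟨k, hkI, hkJ⟩ := Finset.not_disjoint_iff.mp hIJ
  rw [Finset.mem_filter, Finset.mem_range] at hkI hkJ
  exact ⟨k, by omega, hkI.2, hkJ.2⟩

lemma cycle_on_path {l : List V} (hne : l ≠ []) (hch : l.IsChain G.Adj) (hnd : l.Nodup)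
    (hnbh : ∀ w, G.Adj (l.head hne) w → w ∈ l)
    (hnbl : ∀ w, G.Adj (l.getLast hne) w → w ∈ l)
    (hδ1 : 1 ≤ G.minDegree)
    (hcnt : l.length ≤ 2 * G.minDegree) :
    ∃ c, CL G c ∧ c.Perm l := by
  by_cases hadj : G.Adj (l.head hne) (l.getLast hne)
  · exact ⟨l, ⟨hch, hnd, fun h => hadj.symm⟩, List.Perm.refl l⟩
  · obtain ⟨k, hk, h0, h1⟩ := endpoints_pigeonhole G hne hnd hnbh hnbl hδ1 hcnt hadj
    rw [List.head_eq_getElem, List.getD_eq_getElem l _ hk] at h0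
    rw [List.getLast_eq_getElem, List.getD_eq_getElem l _ (by omega : k < l.length)] at h1
    exact crossing_cycle G hch hnd hk h0 h1


lemma exists_spanning_path (hH : ¬ ∃ c, HC G c)
    (h3 : 3 ≤ Fintype.card V)
    (hδ2 : 2 ≤ G.minDegree) (hn21 : Fintype.card V ≤ 2 * G.minDegree + 1) :
    ∃ l, PL G l ∧ ∀ v, v ∈ l := by
  classical
  have hne' : Nonempty V := Fintype.card_pos_iff.mp (by omega)
  obtain ⟨v⟩ := hne'
  let P : ℕ → Prop := fun k => ∃ l : List V, (l.IsChain G.Adj ∧ l.Nodup) ∧ l.length = k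
  have hP1 : P 1 := ⟨[v], ⟨by simp, by simp⟩, rfl⟩
  have hM1 : 1 ≤ Nat.findGreatest P (Fintype.card V) := Nat.le_findGreatest (by omega) hP1
  obtain ⟨l, ⟨hch, hnd⟩, hlen⟩ : P (Nat.findGreatest P (Fintype.card V)) :=
    Nat.findGreatest_spec (m := 1) (by omega) hP1
  set M := Nat.findGreatest P (Fintype.card V) with hMdef
  have hmax : ∀ l' : List V, l'.IsChain G.Adj → l'.Nodup → l'.length ≤ M := by
    intro l' h1 h2
    by_contra hgt
    exact (Nat.findGreatest_is_greatest (P := P) (n := Fintype.card V) (by omega) (h2.length_le_card)) ⟨l', ⟨h1, h2⟩, rfl⟩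
  have hne : l ≠ [] := by intro h; rw [h] at hlen; simp at hlen; omega
  have hnbh : ∀ w, G.Adj (l.head hne) w → w ∈ l := by
    intro w hw
    by_contra hwl
    have hpl : (w :: l).IsChain G.Adj := by
      rw [List.isChain_cons]
      refine ⟨?_, hch⟩
      intro y hy
      rw [List.head?_eq_head hne, Option.mem_def, Option.some.injEq] at hy
      subst hy
      exact hw.symm
    have := hmax (w :: l) hpl (List.nodup_cons.mpr ⟨hwl, hnd⟩)
    simp at this
    omega
  have hnbl : ∀ w, G.Adj (l.getLast hne) w → w ∈ l := by
    intro w hw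
    by_contra hwl
    have hpl : (l ++ [w]).IsChain G.Adj := by
      rw [List.isChain_append]
      refine ⟨hch, List.isChain_singleton w, ?_⟩
      intro x hx y hy
      rw [List.getLast?_eq_getLast hne, Option.mem_def, Option.some.injEq] at hx
      simp only [List.head?_cons, Option.mem_def, Option.some.injEq] at hy
      subst hx; subst hy
      exact hw
    have hnd' : (l ++ [w]).Nodup := by
      rw [List.nodup_append]
      exact ⟨hnd, List.nodup_singleton w, by simp only [List.mem_singleton]; rintro a ha b rfl rfl; exact hwl ha⟩
    have := hmax (l ++ [w]) hpl hnd'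
    simp at this
    omega
  by_cases hspan : ∀ v', v' ∈ l
  · exact ⟨l, ⟨hch, hnd⟩, hspan⟩
  push_neg at hspan
  obtain ⟨z, hz⟩ := hspan
  have hMn : M ≤ Fintype.card V - 1 := by
    have hsub : l.toFinset ⊆ Finset.univ.erase z := by
      intro u hu
      rw [List.mem_toFinset] at hu
      exact Finset.mem_erase.mpr ⟨fun h => hz (h ▸ hu), Finset.mem_univ u⟩
    have := Finset.card_le_card hsub
    rw [List.toFinset_card_of_nodup hnd, Finset.card_erase_of_mem (Finset.mem_univ z),
      Finset.card_univ] at this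
    omega
  have hMδ : G.minDegree + 1 ≤ M := by
    have hsub : insert (l.head hne) (G.neighborFinset (l.head hne)) ⊆ l.toFinset := by
      intro u hu
      rw [Finset.mem_insert] at hu
      rw [List.mem_toFinset]
      rcases hu with rfl | hu
      · exact List.head_mem hne
      · exact hnbh u ((G.mem_neighborFinset _ _).mp hu)
    have hc1 := Finset.card_le_card hsub
    rw [Finset.card_insert_of_notMem (by simp), List.toFinset_card_of_nodup hnd, hlen] at hc1
    have := G.minDegree_le_degree (l.head hne)
    rw [SimpleGraph.degree] at this
    omega
  obtain ⟨c, hcCL, hcperm⟩ := cycle_on_path G hne hch hnd hnbh hnbl (by omega)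
    (by rw [hlen]; omega)
  have hclen : c.length = M := by rw [hcperm.length_eq, hlen]
  have hzc : z ∉ c := fun h => hz (hcperm.subset h)
  have hcross : ∃ w, w ∉ c ∧ ∃ j : Fin c.length, G.Adj w (c.get j) := by
    by_contra hno
    push_neg at hno
    have hsub : insert z (G.neighborFinset z) ⊆ Finset.univ \ c.toFinset := by
      intro u hu
      rw [Finset.mem_insert] at hu
      rw [Finset.mem_sdiff]
      refine ⟨Finset.mem_univ u, ?_⟩
      rw [List.mem_toFinset]
      rcases hu with rfl | hu
      · exact hzc
      · intro huc
        have hidx : c.idxOf u < c.length := List.idxOf_lt_length_iff.mpr huc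
        have : c.get ⟨c.idxOf u, hidx⟩ = u := List.getElem_idxOf hidx
        exact hno z hzc ⟨c.idxOf u, hidx⟩ (by rw [this]; exact (G.mem_neighborFinset _ _).mp hu)
    have hc1 := Finset.card_le_card hsub
    rw [Finset.card_insert_of_notMem (by simp), Finset.card_sdiff_of_subset (Finset.subset_univ _),
      Finset.card_univ, List.toFinset_card_of_nodup hcCL.2.1, hclen] at hc1
    have := G.minDegree_le_degree z
    rw [SimpleGraph.degree] at this
    omega
  obtain ⟨w, hwc, j, hadj⟩ := hcross
  have hext := extend_path G hcCL hwc j.isLt hadj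
  have := hmax _ hext.1 hext.2
  simp [List.length_rotate, hclen] at this


/-- a hamiltonian path of `G` as a function on indices `0..m`. -/
def HamFn (m : ℕ) (x : ℕ → V) : Prop :=
  (∀ i, i ≤ m → ∀ j, j ≤ m → x i = x j → i = j) ∧
  (∀ v, ∃ i, i ≤ m ∧ x i = v) ∧
  (∀ i, i < m → G.Adj (x i) (x (i+1)))

lemma hamFn_of_list {l : List V} (hch : l.IsChain G.Adj) (hnd : l.Nodup)
    (hspan : ∀ v, v ∈ l) (hne : l ≠ []) :
    HamFn G (l.length - 1) (fun i => l.getD i (l.head hne)) := by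
  have hpos : 0 < l.length := List.length_pos_iff.mpr hne
  refine ⟨?_, ?_, ?_⟩
  · intro i hi j hj hij
    have hij' : l.getD i (l.head hne) = l.getD j (l.head hne) := hij
    rw [List.getD_eq_getElem l _ (by omega), List.getD_eq_getElem l _ (by omega)] at hij'
    exact (hnd.getElem_inj_iff).mp hij'
  · intro v
    have hv : v ∈ l := hspan v
    refine ⟨l.idxOf v, by have := List.idxOf_lt_length_iff.mpr hv; omega, ?_⟩
    show l.getD (l.idxOf v) (l.head hne) = v
    rw [List.getD_eq_getElem l _ (List.idxOf_lt_length_iff.mpr hv)]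
    exact List.getElem_idxOf _
  · intro i hi
    show G.Adj (l.getD i (l.head hne)) (l.getD (i+1) (l.head hne))
    rw [List.getD_eq_getElem l _ (by omega), List.getD_eq_getElem l _ (by omega)]
    have := List.isChain_iff_getElem.mp hch i (by omega)
    simpa using this

/-- The list associated to a `HamFn`. -/
lemma list_of_hamFn {m : ℕ} {x : ℕ → V} (hx : HamFn G m x) :
    ∃ L : List V, L.IsChain G.Adj ∧ L.Nodup ∧ (∀ v, v ∈ L) ∧ L.length = m + 1 ∧
      (∀ i (hi : i < L.length), L[i]'hi = x i) := by
  obtain ⟨hinj, hsurj, hadj⟩ := hx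
  refine ⟨(List.range (m+1)).map x, ?_, ?_, ?_, by simp, ?_⟩
  · rw [List.isChain_iff_getElem]
    intro i hi
    simp only [List.length_map, List.length_range] at hi
    simp only [List.get_eq_getElem, List.getElem_map, List.getElem_range]
    exact hadj i (by omega)
  · rw [List.nodup_iff_injective_get]
    intro a b hab
    simp only [List.get_eq_getElem, List.getElem_map, List.getElem_range] at hab
    have ha := a.isLt; have hb := b.isLt
    simp only [List.length_map, List.length_range] at ha hb
    exact Fin.ext (hinj a (by omega) b (by omega) hab)
  · intro v
    obtain ⟨i, hi, rfl⟩ := hsurj v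
    simp only [List.mem_map, List.mem_range]
    exact ⟨i, by omega, rfl⟩
  · intro i hi
    simp

lemma noclose {m : ℕ} (hH : ¬ ∃ c, HC G c) {x : ℕ → V} (hx : HamFn G m x) :
    ¬ G.Adj (x 0) (x m) := by
  intro hadj
  obtain ⟨L, hch, hnd, hspan, hlen, hget⟩ := list_of_hamFn G hx
  refine hH ⟨L, ⟨hch, hnd, ?_⟩, hspan⟩
  intro hne
  rw [List.getLast_eq_getElem, List.head_eq_getElem]
  have h1 : L[L.length - 1]'(by omega) = x m := by
    rw [getElem_idx_eq L (by omega : L.length - 1 = m) (by omega)]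
    exact hget m (by omega)
  have h0 : L[0]'(by omega) = x 0 := hget 0 (by omega)
  rw [h1, h0]
  exact hadj.symm

lemma nocross {m : ℕ} (hH : ¬ ∃ c, HC G c) {x : ℕ → V} (hx : HamFn G m x)
    {k : ℕ} (hk : k < m) : ¬ (G.Adj (x 0) (x (k+1)) ∧ G.Adj (x m) (x k)) := by
  rintro ⟨h0, h1⟩
  obtain ⟨L, hch, hnd, hspan, hlen, hget⟩ := list_of_hamFn G hx
  have hkL : k + 1 < L.length := by omega
  have e0 : L[0]'(by omega) = x 0 := hget 0 (by omega)
  have ek1 : L[k+1]'hkL = x (k+1) := hget (k+1) (by omega)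
  have ek : L[k]'(by omega) = x k := hget k (by omega)
  have elast : L[L.length - 1]'(by omega) = x m := by
    rw [getElem_idx_eq L (by omega : L.length - 1 = m) (by omega)]
    exact hget m (by omega)
  obtain ⟨c, hcCL, hcperm⟩ := crossing_cycle G hch hnd hkL (by rw [e0, ek1]; exact h0)
    (by rw [elast, ek]; exact h1)
  exact hH ⟨c, hcCL, fun v => hcperm.mem_iff.mpr (hspan v)⟩

lemma partition_lemma (hH : ¬ ∃ c, HC G c) (hδ2 : 2 ≤ G.minDegree)
    {x : ℕ → V} (hx : HamFn G (2 * G.minDegree) x) :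
    (∀ k, k < 2 * G.minDegree →
      (G.Adj (x 0) (x (k+1)) ↔ ¬ G.Adj (x (2 * G.minDegree)) (x k))) ∧
    ((Finset.range (2 * G.minDegree)).filter
      (fun k => G.Adj (x 0) (x (k+1)))).card = G.minDegree := by
  classical
  set m := 2 * G.minDegree with hm
  obtain ⟨hinj, hsurj, hadj⟩ := hx
  have hnc : ¬ G.Adj (x 0) (x m) := noclose G hH ⟨hinj, hsurj, hadj⟩
  set I : Finset ℕ := (Finset.range m).filter (fun k => G.Adj (x 0) (x (k+1))) with hI
  set J : Finset ℕ := (Finset.range m).filter (fun k => G.Adj (x m) (x k)) with hJ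
  -- canonical index
  have hidx : ∀ w : V, ∃ i, i ≤ m ∧ x i = w := hsurj
  have hIcard : G.minDegree ≤ I.card := by
    refine le_trans (G.minDegree_le_degree (x 0)) ?_
    refine Finset.card_le_card_of_injOn (fun w => Nat.find (hidx w) - 1) ?_ ?_
    · intro w hw
      rw [Finset.mem_coe, SimpleGraph.mem_neighborFinset] at hw
      obtain ⟨hile, hxi⟩ := Nat.find_spec (hidx w)
      have hne0 : Nat.find (hidx w) ≠ 0 := by
        intro h0; rw [h0] at hxi; exact hw.ne' hxi.symm
      have hnem : Nat.find (hidx w) ≠ m := by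
        intro h0; rw [h0] at hxi; exact hnc (hxi ▸ hw)
      show Nat.find (hidx w) - 1 ∈ I
      rw [hI, Finset.mem_filter, Finset.mem_range]
      refine ⟨by omega, ?_⟩
      rw [show Nat.find (hidx w) - 1 + 1 = Nat.find (hidx w) by omega, hxi]
      exact hw
    · intro w hw w' hw' heq
      simp only [Finset.coe_sort_coe, Finset.mem_coe, SimpleGraph.mem_neighborFinset] at hw hw'
      simp only at heq
      obtain ⟨hile, hxi⟩ := Nat.find_spec (hidx w)
      obtain ⟨hile', hxi'⟩ := Nat.find_spec (hidx w')
      have hne0 : Nat.find (hidx w) ≠ 0 := by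
        intro h0; rw [h0] at hxi; exact hw.ne' hxi.symm
      have hne0' : Nat.find (hidx w') ≠ 0 := by
        intro h0; rw [h0] at hxi'; exact hw'.ne' hxi'.symm
      have : Nat.find (hidx w) = Nat.find (hidx w') := by omega
      rw [← hxi, ← hxi', this]
  have hJcard : G.minDegree ≤ J.card := by
    refine le_trans (G.minDegree_le_degree (x m)) ?_
    refine Finset.card_le_card_of_injOn (fun w => Nat.find (hidx w)) ?_ ?_
    · intro w hw
      rw [Finset.mem_coe, SimpleGraph.mem_neighborFinset] at hw
      obtain ⟨hile, hxi⟩ := Nat.find_spec (hidx w)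
      have hnem : Nat.find (hidx w) ≠ m := by
        intro h0; rw [h0] at hxi; exact hw.ne' hxi.symm
      show Nat.find (hidx w) ∈ J
      rw [hJ, Finset.mem_filter, Finset.mem_range]
      exact ⟨by omega, by rw [hxi]; exact hw⟩
    · intro w hw w' hw' heq
      simp only at heq
      obtain ⟨hile, hxi⟩ := Nat.find_spec (hidx w)
      obtain ⟨hile', hxi'⟩ := Nat.find_spec (hidx w')
      rw [← hxi, ← hxi', heq]
  have hdisj : Disjoint I J := by
    rw [Finset.disjoint_left]
    intro k hkI hkJ
    rw [hI, Finset.mem_filter, Finset.mem_range] at hkI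
    rw [hJ, Finset.mem_filter, Finset.mem_range] at hkJ
    exact nocross G hH ⟨hinj, hsurj, hadj⟩ hkI.1 ⟨hkI.2, hkJ.2⟩
  have hsub : I ∪ J ⊆ Finset.range m :=
    Finset.union_subset (Finset.filter_subset _ _) (Finset.filter_subset _ _)
  have hcards : I.card + J.card ≤ m := by
    have := Finset.card_le_card hsub
    rwa [Finset.card_union_of_disjoint hdisj, Finset.card_range] at this
  have hIc : I.card = G.minDegree := by omega
  have hJc : J.card = G.minDegree := by omega
  have huniv : I ∪ J = Finset.range m := by
    apply Finset.eq_of_subset_of_card_le hsub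
    rw [Finset.card_range, Finset.card_union_of_disjoint hdisj]
    omega
  refine ⟨?_, hIc⟩
  intro k hk
  have hmem : k ∈ I ∪ J := by rw [huniv, Finset.mem_range]; exact hk
  rw [Finset.mem_union, hI, hJ, Finset.mem_filter, Finset.mem_filter, Finset.mem_range] at hmem
  constructor
  · intro hA hB
    have : k ∈ I := by rw [hI, Finset.mem_filter, Finset.mem_range]; exact ⟨hk, hA⟩
    have : k ∈ J := by rw [hJ, Finset.mem_filter, Finset.mem_range]; exact ⟨hk, hB⟩
    exact (Finset.disjoint_left.mp hdisj ‹k ∈ I› ‹k ∈ J›)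
  · intro hB
    tauto


def rotFn (x : ℕ → V) (i : ℕ) : ℕ → V := fun k => if k ≤ i then x (i - k) else x k

lemma rotFn_le (x : ℕ → V) {i k : ℕ} (h : k ≤ i) : rotFn x i k = x (i - k) := if_pos h
lemma rotFn_gt (x : ℕ → V) {i k : ℕ} (h : i < k) : rotFn x i k = x k := if_neg (by omega)

lemma rotFn_ham {m : ℕ} {x : ℕ → V} (hx : HamFn G m x) {i : ℕ} (him : i < m)
    (h0 : G.Adj (x 0) (x (i+1))) : HamFn G m (rotFn x i) := by
  obtain ⟨hinj, hsurj, hadj⟩ := hx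
  refine ⟨?_, ?_, ?_⟩
  · intro a ha b hb hab
    by_cases hai : a ≤ i <;> by_cases hbi : b ≤ i
    · rw [rotFn_le x hai, rotFn_le x hbi] at hab
      have := hinj _ (by omega) _ (by omega) hab
      omega
    · rw [rotFn_le x hai, rotFn_gt x (by omega)] at hab
      have := hinj _ (by omega) _ (by omega) hab
      omega
    · rw [rotFn_gt x (by omega), rotFn_le x hbi] at hab
      have := hinj _ (by omega) _ (by omega) hab
      omega
    · rw [rotFn_gt x (by omega), rotFn_gt x (by omega)] at hab
      exact hinj _ (by omega) _ (by omega) hab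
  · intro v
    obtain ⟨j, hj, rfl⟩ := hsurj v
    by_cases hji : j ≤ i
    · exact ⟨i - j, by omega, by rw [rotFn_le x (by omega), show i - (i - j) = j by omega]⟩
    · exact ⟨j, hj, by rw [rotFn_gt x (by omega)]⟩
  · intro k hk
    rcases lt_trichotomy k i with h | rfl | h
    · rw [rotFn_le x (by omega), rotFn_le x (by omega)]
      have := hadj (i - k - 1) (by omega)
      rw [show i - k - 1 + 1 = i - k by omega] at this
      rw [show i - (k+1) = i - k - 1 by omega]
      exact this.symm
    · rw [rotFn_le x (le_refl k), rotFn_gt x (by omega), Nat.sub_self]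
      exact h0
    · rw [rotFn_gt x (by omega), rotFn_gt x (by omega)]
      exact hadj k hk

def revFn (m : ℕ) (x : ℕ → V) : ℕ → V := fun k => x (m - k)

lemma revFn_ham {m : ℕ} {x : ℕ → V} (hx : HamFn G m x) : HamFn G m (revFn m x) := by
  obtain ⟨hinj, hsurj, hadj⟩ := hx
  refine ⟨?_, ?_, ?_⟩
  · intro a ha b hb hab
    have := hinj _ (by omega : m - a ≤ m) _ (by omega : m - b ≤ m) hab
    omega
  · intro v
    obtain ⟨j, hj, rfl⟩ := hsurj v
    exact ⟨m - j, by omega, by rw [revFn, show m - (m - j) = j by omega]⟩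
  · intro k hk
    show G.Adj (x (m - k)) (x (m - (k+1)))
    have := hadj (m - k - 1) (by omega)
    rw [show m - k - 1 + 1 = m - k by omega] at this
    rw [show m - (k+1) = m - k - 1 by omega]
    exact this.symm

section Arules

variable (hH : ¬ ∃ c, HC G c) (hδ2 : 2 ≤ G.minDegree)

local notation "m" => 2 * G.minDegree

/-- `P x k` : index `k` is in the crossing set `I` of the hamiltonian path `x`. -/
def Pred (x : ℕ → V) (k : ℕ) : Prop := G.Adj (x 0) (x (k+1))

include hH hδ2

lemma arule_lt {x : ℕ → V} (hx : HamFn G m x) {i : ℕ} (him : i < m) (hPi : Pred G x i)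
    {j : ℕ} (hji : j < i) : G.Adj (x i) (x j) ↔ Pred G x (j+1) := by
  have hQ : HamFn G m (rotFn x i) := rotFn_ham G hx him hPi
  have hpart := (partition_lemma G hH hδ2 hQ).1 (i - 1 - j) (by omega)
  rw [rotFn_le x (by omega : i - 1 - j ≤ i), rotFn_le x (by omega : i - 1 - j + 1 ≤ i),
    rotFn_le x (by omega : (0:ℕ) ≤ i), rotFn_gt x (by omega : i < m)] at hpart
  rw [show i - 0 = i by omega, show i - (i - 1 - j + 1) = j by omega,
    show i - (i - 1 - j) = j + 1 by omega] at hpart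
  have hpx := (partition_lemma G hH hδ2 hx).1 (j+1) (by omega)
  rw [hpart]
  unfold Pred
  rw [hpx]

lemma arule_gt {x : ℕ → V} (hx : HamFn G m x) {i : ℕ} (him : i < m) (hPi : Pred G x i)
    {k : ℕ} (hik : i < k) (hkm : k < m) : G.Adj (x i) (x (k+1)) ↔ Pred G x k := by
  have hQ : HamFn G m (rotFn x i) := rotFn_ham G hx him hPi
  have hpart := (partition_lemma G hH hδ2 hQ).1 k hkm
  rw [rotFn_le x (by omega : (0:ℕ) ≤ i), rotFn_gt x (by omega : i < k),
    rotFn_gt x (by omega : i < k + 1), rotFn_gt x (by omega : i < m)] at hpart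
  rw [show i - 0 = i by omega] at hpart
  have hpx := (partition_lemma G hH hδ2 hx).1 k hkm
  rw [hpart]
  unfold Pred
  exact hpx.symm

/-- Interval case: if two consecutive indices are in `I`, then `I = [0, δ)` and
every `x i`, `i < δ`, is adjacent to `x δ`. -/
lemma interval_case {x : ℕ → V} (hx : HamFn G m x)
    {i₀ : ℕ} (hi₀ : i₀ + 1 < m) (hP0 : Pred G x i₀) (hP1 : Pred G x (i₀+1)) :
    (∀ k, k < m → (Pred G x k ↔ k < G.minDegree)) ∧
    (∀ i, i < G.minDegree → G.Adj (x i) (x G.minDegree)) := by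
  have hadj0 : Pred G x 0 := hx.2.2 0 (by omega)
  have hup : ∀ i, i ≤ i₀ → Pred G x i → Pred G x (i+1) := by
    intro i hi hPiv
    rcases eq_or_lt_of_le hi with rfl | hlt
    · exact hP1
    · have h1 : G.Adj (x i) (x (i₀+1)) := (arule_gt G hH hδ2 hx (by omega) hPiv hlt (by omega)).mpr hP0
      exact (arule_lt G hH hδ2 hx (by omega) hP1 (by omega : i < i₀ + 1)).mp h1.symm
  have hupAll : ∀ i, i ≤ i₀ + 1 → Pred G x i := by
    intro i hi
    induction i with
    | zero => exact hadj0
    | succ t ih => exact hup t (by omega) (ih (by omega))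
  have hdown : ∀ i', i₀ + 1 < i' → i' < m → Pred G x i' → Pred G x (i' - 1) := by
    intro i' hgt hlt hPiv
    have h1 : G.Adj (x i') (x i₀) := (arule_lt G hH hδ2 hx hlt hPiv (by omega)).mpr hP1
    have h2 := (arule_gt G hH hδ2 hx (by omega : i₀ < m) hP0 (by omega : i₀ < i' - 1) (by omega)).mp
    rw [show i' - 1 + 1 = i' by omega] at h2
    exact h2 h1.symm
  have hdownAll : ∀ d k, k < m → Pred G x k → i₀ + 1 ≤ k - d → Pred G x (k - d) := by
    intro d
    induction d with
    | zero => intro k hk hPk _; simpa using hPk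
    | succ t ih =>
      intro k hk hPk hge
      have h1 : Pred G x (k - t) := ih k hk hPk (by omega)
      have h2 := hdown (k - t) (by omega) (by omega) h1
      rw [show k - t - 1 = k - (t+1) by omega] at h2
      exact h2
  have hdclosed : ∀ k, k < m → Pred G x k → ∀ j, j ≤ k → Pred G x j := by
    intro k hk hPk j hj
    by_cases hj0 : j ≤ i₀ + 1
    · exact hupAll j hj0
    · have := hdownAll (k - j) k hk hPk (by omega)
      rw [show k - (k - j) = j by omega] at this
      exact this
  have hIcard := (partition_lemma G hH hδ2 hx).2
  have hIset : ∀ k, k < m → (Pred G x k ↔ k < G.minDegree) := by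
    intro k hk
    constructor
    · intro hPk
      by_contra hge
      have hsub : Finset.range (k+1) ⊆
          (Finset.range m).filter (fun t => G.Adj (x 0) (x (t+1))) := by
        intro j hj
        rw [Finset.mem_range] at hj
        rw [Finset.mem_filter, Finset.mem_range]
        exact ⟨by omega, hdclosed k hk hPk j (by omega)⟩
      have := Finset.card_le_card hsub
      rw [Finset.card_range, hIcard] at this
      omega
    · intro hlt
      by_contra hPk
      have hsub : (Finset.range m).filter (fun t => G.Adj (x 0) (x (t+1))) ⊆
          Finset.range k := by
        intro j hj
        rw [Finset.mem_filter, Finset.mem_range] at hj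
        rw [Finset.mem_range]
        by_contra hge
        exact hPk (hdclosed j hj.1 hj.2 k (by omega))
      have := Finset.card_le_card hsub
      rw [Finset.card_range, hIcard] at this
      omega
  refine ⟨hIset, ?_⟩
  intro i hi
  rcases eq_or_lt_of_le (show i + 1 ≤ G.minDegree by omega) with heq | hlt
  · have := hx.2.2 i (by omega)
    rw [show G.minDegree = i + 1 by omega]
    exact this
  · have hPi : Pred G x i := (hIset i (by omega)).mpr hi
    have hPd : Pred G x (G.minDegree - 1) := (hIset _ (by omega)).mpr (by omega)
    have h := (arule_gt G hH hδ2 hx (by omega : i < m) hPi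
      (by omega : i < G.minDegree - 1) (by omega)).mpr hPd
    rw [show G.minDegree - 1 + 1 = G.minDegree by omega] at h
    exact h


lemma revPred {x : ℕ → V} (hx : HamFn G m x) :
    ∀ t, t < m → (Pred G (revFn m x) t ↔ ¬ Pred G x (m - 1 - t)) := by
  intro t ht
  have hp := (partition_lemma G hH hδ2 hx).1 (m - 1 - t) (by omega)
  show G.Adj (x (m - 0)) (x (m - (t+1))) ↔ ¬ G.Adj (x 0) (x (m - 1 - t + 1))
  rw [Nat.sub_zero, show m - (t+1) = m - 1 - t by omega]
  rw [show m - 1 - t + 1 = m - t by omega] at hp ⊢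
  constructor
  · intro h hc
    exact (hp.mp hc) h
  · intro h
    by_contra hc
    exact h (hp.mpr hc)

lemma parity_case {x : ℕ → V} (hx : HamFn G m x)
    (hnc : ∀ k, k + 1 < m → ¬ (Pred G x k ∧ Pred G x (k+1)))
    (hor : ∀ k, k + 1 < m → (Pred G x k ∨ Pred G x (k+1))) :
    ∀ k, k < m → (Pred G x k ↔ k % 2 = 0) := by
  intro k
  induction k with
  | zero => intro _; exact iff_of_true (hx.2.2 0 (by omega)) rfl
  | succ t ih =>
    intro hk
    have hpt := ih (by omega)
    have hstep : Pred G x (t+1) ↔ ¬ Pred G x t := by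
      constructor
      · intro h1 h2
        exact hnc t hk ⟨h2, h1⟩
      · intro h1
        exact (hor t hk).resolve_left h1
    rw [hstep, hpt]
    omega

omit hH hδ2

lemma deg_ge {mm : ℕ} {x : ℕ → V} (hx : HamFn G mm x) (v : V) (S : Finset ℕ)
    (hSm : ∀ k ∈ S, k ≤ mm) (hadj : ∀ k ∈ S, G.Adj v (x k)) : S.card ≤ G.degree v := by
  rw [SimpleGraph.degree]
  refine Finset.card_le_card_of_injOn (fun k => x k) ?_ ?_
  · intro k hk
    rw [Finset.mem_coe, SimpleGraph.mem_neighborFinset]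
    exact hadj k hk
  · intro a ha b hb hab
    simp only [Finset.mem_coe] at ha hb
    exact hx.1 a (hSm a ha) b (hSm b hb) hab

lemma evens_card (d : ℕ) :
    ((Finset.range (2*d+1)).filter (fun k => k % 2 = 0)).card = d + 1 := by
  induction d with
  | zero => rfl
  | succ t ih =>
    rw [show 2*(t+1)+1 = (2*t+1+1)+1 by ring, Finset.range_add_one, Finset.range_add_one,
      Finset.filter_insert, Finset.filter_insert]
    rw [if_pos (by omega : (2*t+1+1) % 2 = 0), if_neg (by omega : ¬ (2*t+1) % 2 = 0)]
    rw [Finset.card_insert_of_notMem (by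
      intro hmem
      have := Finset.mem_range.mp (Finset.filter_subset _ _ hmem)
      omega)]
    rw [ih]

lemma odds_card (d : ℕ) :
    ((Finset.range (2*d+1)).filter (fun k => ¬ k % 2 = 0)).card = d := by
  induction d with
  | zero => rfl
  | succ t ih =>
    rw [show 2*(t+1)+1 = (2*t+1+1)+1 by ring, Finset.range_add_one, Finset.range_add_one,
      Finset.filter_insert, Finset.filter_insert]
    rw [if_neg (by omega : ¬ ¬ (2*t+1+1) % 2 = 0), if_pos (by omega : ¬ (2*t+1) % 2 = 0)]
    rw [Finset.card_insert_of_notMem (by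
      intro hmem
      have := Finset.mem_range.mp (Finset.filter_subset _ _ hmem)
      omega)]
    rw [ih]

include hH hδ2

lemma alternating_adj {x : ℕ → V} (hx : HamFn G m x)
    (hpar : ∀ k, k < m → (Pred G x k ↔ k % 2 = 0)) :
    ∀ w, w ≤ m → w % 2 = 1 → ∀ i, i ≤ m → i % 2 = 0 → G.Adj (x w) (x i) := by
  intro w hw hw2 i hi hi2
  have hwm : w < m := by omega
  by_cases him : i = m
  · subst him
    have hp := (partition_lemma G hH hδ2 hx).1 w hwm
    have : ¬ Pred G x w := by rw [hpar w hwm]; omega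
    have hadj := not_not.mp (fun hc => this (hp.mpr hc))
    exact hadj.symm
  · have him' : i < m := by omega
    have hPi : Pred G x i := (hpar i him').mpr hi2
    rcases lt_trichotomy w i with hlt | heq | hgt
    · have h1 : Pred G x (w+1) := (hpar (w+1) (by omega)).mpr (by omega)
      exact ((arule_lt G hH hδ2 hx him' hPi hlt).mpr h1).symm
    · omega
    · by_cases hw1 : w = i + 1
      · subst hw1
        exact (hx.2.2 i him').symm
      · have h1 : Pred G x (w-1) := (hpar (w-1) (by omega)).mpr (by omega)
        have h2 := (arule_gt G hH hδ2 hx him' hPi (by omega : i < w - 1) (by omega)).mpr h1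
        rw [show w - 1 + 1 = w by omega] at h2
        exact h2.symm

lemma case_odd (hcard : Fintype.card V = 2 * G.minDegree + 1)
    (hq2 : (∑ v, G.degree v) + 2 ≤ 2 * (G.minDegree * G.minDegree) + 2 * G.minDegree) :
    False := by
  classical
  obtain ⟨l, ⟨hch, hnd⟩, hspan⟩ := exists_spanning_path G hH (by omega) hδ2 (by omega)
  have hneV : Nonempty V := Fintype.card_pos_iff.mp (by omega)
  have hne : l ≠ [] := by
    intro h
    obtain ⟨v⟩ := hneV
    rw [h] at hspan
    simpa using hspan v
  have hlen : l.length = 2 * G.minDegree + 1 := by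
    have h1 : l.toFinset = Finset.univ := by ext v; simp [hspan v]
    have h2 := List.toFinset_card_of_nodup hnd
    rw [h1, Finset.card_univ, hcard] at h2
    omega
  have hx : HamFn G m (fun i => l.getD i (l.head hne)) := by
    have h := hamFn_of_list G hch hnd hspan hne
    rw [hlen] at h
    simpa using h
  set x : ℕ → V := fun i => l.getD i (l.head hne) with hxdef
  have hrev : ∀ t, t < m → (Pred G (revFn m x) t ↔ ¬ Pred G x (m - 1 - t)) :=
    revPred G hH hδ2 hx
  by_cases hcons : ∃ i₀, i₀ + 1 < m ∧ Pred G x i₀ ∧ Pred G x (i₀+1)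
  · obtain ⟨i₀, h1, h2, h3⟩ := hcons
    have hint := interval_case G hH hδ2 hx h1 h2 h3
    have hr0 : Pred G (revFn m x) 0 := by
      rw [hrev 0 (by omega)]
      intro hc
      have := (hint.1 (m - 1 - 0) (by omega)).mp hc
      omega
    have hr1 : Pred G (revFn m x) 1 := by
      rw [hrev 1 (by omega)]
      intro hc
      have := (hint.1 (m - 1 - 1) (by omega)).mp hc
      omega
    have hrint := interval_case G hH hδ2 (revFn_ham G hx) (by omega : 0 + 1 < m) hr0 hr1
    have hdeg : 2 * G.minDegree ≤ G.degree (x G.minDegree) := by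
      have hS : ((Finset.range (m+1)).erase G.minDegree).card = 2 * G.minDegree := by
        rw [Finset.card_erase_of_mem (Finset.mem_range.mpr (by omega)), Finset.card_range]
        omega
      rw [← hS]
      refine deg_ge G hx (x G.minDegree) ((Finset.range (m+1)).erase G.minDegree) ?_ ?_
      · intro k hk
        have := Finset.mem_range.mp (Finset.erase_subset _ _ hk)
        omega
      · intro k hk
        rw [Finset.mem_erase, Finset.mem_range] at hk
        obtain ⟨hkne, hkm⟩ := hk
        rcases lt_or_gt_of_ne hkne with hlt | hgt
        · exact (hint.2 k hlt).symm
        · have h4 := hrint.2 (m - k) (by omega)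
          show G.Adj (x G.minDegree) (x k)
          have e1 : revFn m x (m - k) = x k := by
            rw [revFn, show m - (m - k) = k by omega]
          have e2 : revFn m x G.minDegree = x G.minDegree := by
            rw [revFn, show m - G.minDegree = G.minDegree by omega]
          rw [e1, e2] at h4
          exact h4.symm
    have hsplit : G.degree (x G.minDegree) + ∑ v ∈ Finset.univ.erase (x G.minDegree), G.degree v = ∑ v, G.degree v :=
      Finset.add_sum_erase Finset.univ (fun v => G.degree v) (Finset.mem_univ (x G.minDegree))
    have herase : (Finset.univ.erase (x G.minDegree)).card = 2 * G.minDegree := by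
      rw [Finset.card_erase_of_mem (Finset.mem_univ _), Finset.card_univ, hcard]
      omega
    have hlow : (Finset.univ.erase (x G.minDegree)).card * G.minDegree
        ≤ ∑ v ∈ Finset.univ.erase (x G.minDegree), G.degree v := by
      have := Finset.card_nsmul_le_sum (Finset.univ.erase (x G.minDegree)) (fun v => G.degree v)
        G.minDegree (fun v _ => G.minDegree_le_degree v)
      simpa using this
    rw [herase] at hlow
    have e1 : 2 * G.minDegree * G.minDegree = 2 * (G.minDegree * G.minDegree) := by ring
    rw [e1] at hlow
    omega
  · push_neg at hcons
    by_cases hcons2 : ∃ k, k + 1 < m ∧ ¬ Pred G x k ∧ ¬ Pred G x (k+1)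
    · obtain ⟨k, hk1, hk2, hk3⟩ := hcons2
      have hr2 : Pred G (revFn m x) (m - 2 - k) := by
        rw [hrev _ (by omega), show m - 1 - (m - 2 - k) = k + 1 by omega]
        exact hk3
      have hr3 : Pred G (revFn m x) (m - 2 - k + 1) := by
        rw [hrev _ (by omega), show m - 1 - (m - 2 - k + 1) = k by omega]
        exact hk2
      have hrint := interval_case G hH hδ2 (revFn_ham G hx)
        (show m - 2 - k + 1 < m by omega) hr2 hr3
      have hP1 : Pred G x 1 := by
        have h5 := hrev (m - 2) (by omega)
        rw [show m - 1 - (m - 2) = 1 by omega] at h5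
        have h6 : ¬ Pred G (revFn m x) (m - 2) := by
          intro hc
          have := (hrint.1 (m - 2) (by omega)).mp hc
          omega
        by_contra hc
        exact h6 (h5.mpr hc)
      exact hcons 0 (by omega) (hx.2.2 0 (by omega)) hP1
    · push_neg at hcons2
      have hpar := parity_case G hH hδ2 hx
        (fun k hk hboth => hcons k hk hboth.1 hboth.2)
        (fun k hk => or_iff_not_imp_left.mpr (hcons2 k hk))
      have hadjow := alternating_adj G hH hδ2 hx hpar
      have hdegodd : ∀ w, w ≤ m → w % 2 = 1 → G.minDegree + 1 ≤ G.degree (x w) := by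
        intro w hw hw2
        have hS := evens_card G.minDegree
        rw [← hS]
        refine deg_ge G hx (x w) _ ?_ ?_
        · intro k hk
          have := Finset.mem_range.mp (Finset.filter_subset _ _ hk)
          omega
        · intro k hk
          rw [Finset.mem_filter, Finset.mem_range] at hk
          exact hadjow w hw hw2 k (by omega) hk.2
      set O : Finset V := ((Finset.range (m+1)).filter (fun k => ¬ k % 2 = 0)).image x with hO
      have hOcard : O.card = G.minDegree := by
        rw [hO, Finset.card_image_of_injOn, odds_card]
        intro a ha b hb hab
        simp only [Finset.coe_filter, Finset.mem_range, Set.mem_setOf_eq] at ha hb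
        exact hx.1 a (by omega) b (by omega) hab
      have hOsub : O ⊆ Finset.univ := Finset.subset_univ O
      have hsplit : ∑ v ∈ Finset.univ \ O, G.degree v + ∑ v ∈ O, G.degree v = ∑ v, G.degree v :=
        Finset.sum_sdiff (f := fun v => G.degree v) hOsub
      have hlow1 : O.card * (G.minDegree + 1) ≤ ∑ v ∈ O, G.degree v := by
        have := Finset.card_nsmul_le_sum O (fun v => G.degree v) (G.minDegree + 1) (fun v hv => by
          rw [hO, Finset.mem_image] at hv
          obtain ⟨k, hk, rfl⟩ := hv
          rw [Finset.mem_filter, Finset.mem_range] at hk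
          exact hdegodd k (by omega) (by omega))
        simpa using this
      have hlow2 : (Finset.univ \ O).card * G.minDegree ≤ ∑ v ∈ Finset.univ \ O, G.degree v := by
        have := Finset.card_nsmul_le_sum (Finset.univ \ O) (fun v => G.degree v) G.minDegree
          (fun v _ => G.minDegree_le_degree v)
        simpa using this
      have hsd : (Finset.univ \ O).card = G.minDegree + 1 := by
        rw [Finset.card_sdiff_of_subset hOsub, Finset.card_univ, hcard, hOcard]
        omega
      rw [hOcard] at hlow1
      rw [hsd] at hlow2
      have e2 : G.minDegree * (G.minDegree + 1) = G.minDegree * G.minDegree + G.minDegree := by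
        ring
      have e3 : (G.minDegree + 1) * G.minDegree = G.minDegree * G.minDegree + G.minDegree := by
        ring
      rw [e2] at hlow1
      rw [e3] at hlow2
      omega

end Arules

end NikoAux

open SimpleGraph

variable {V : Type*}

theorem nikoghosyan_2011_size (G : SimpleGraph V) [Fintype V] [DecidableEq V] [DecidableRel G.Adj]
    [Fintype G.edgeSet]
    (hn : 3 ≤ Fintype.card V)
    (hq : (G.edgeFinset.card : ℤ) ≤ (G.minDegree : ℤ) ^ 2 + G.minDegree - 1) :
    G.IsHamiltonian := by
  classical
  have hq1 : G.edgeFinset.card + 1 ≤ G.minDegree * G.minDegree + G.minDegree := by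
    have h := hq
    rw [pow_two] at h
    have h2 : ((G.edgeFinset.card + 1 : ℕ) : ℤ)
        ≤ ((G.minDegree * G.minDegree + G.minDegree : ℕ) : ℤ) := by
      push_cast
      linarith
    exact_mod_cast h2
  have hsum := G.sum_degrees_eq_twice_card_edges
  rw [Subsingleton.elim (G.fintypeEdgeSet) (inferInstance : Fintype G.edgeSet)] at hsum
  have hhs : Fintype.card V * G.minDegree ≤ ∑ v, G.degree v := by
    have := Finset.card_nsmul_le_sum Finset.univ (fun v => G.degree v) G.minDegree
      (fun v _ => G.minDegree_le_degree v)
    simpa [Finset.card_univ, smul_eq_mul] using this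
  have hδ2 : 2 ≤ G.minDegree := by
    rcases Nat.lt_or_ge G.minDegree 2 with h | h
    · interval_cases h' : G.minDegree <;> omega
    · exact h
  have hn21 : Fintype.card V ≤ 2 * G.minDegree + 1 := by
    by_contra hcon
    push_neg at hcon
    nlinarith
  by_contra hnotHam
  have hH : ¬ ∃ c, NikoAux.HC G c := fun hc => hnotHam (NikoAux.isHamiltonian_of_HC G hn hc)
  rcases Nat.lt_or_ge (Fintype.card V) (2 * G.minDegree + 1) with hlt | hge
  · -- n ≤ 2δ : close the hamiltonian path directly
    obtain ⟨l, ⟨hch, hnd⟩, hspan⟩ := NikoAux.exists_spanning_path G hH hn hδ2 (by omega)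
    have hneV : Nonempty V := Fintype.card_pos_iff.mp (by omega)
    have hne : l ≠ [] := by
      intro h
      obtain ⟨v⟩ := hneV
      rw [h] at hspan
      simpa using hspan v
    have hlen : l.length = Fintype.card V := by
      have h1 : l.toFinset = Finset.univ := by ext v; simp [hspan v]
      have h2 := List.toFinset_card_of_nodup hnd
      rw [h1, Finset.card_univ] at h2
      omega
    obtain ⟨c, hcCL, hcperm⟩ := NikoAux.cycle_on_path G hne hch hnd
      (fun w _ => hspan w) (fun w _ => hspan w) (by omega) (by omega)
    exact hH ⟨c, hcCL, fun v => hcperm.mem_iff.mpr (hspan v)⟩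
  · -- n = 2δ + 1
    have hcard : Fintype.card V = 2 * G.minDegree + 1 := le_antisymm hn21 hge
    exact NikoAux.case_odd G hH hδ2 hcard (by omega)
end
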